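/- If a family ℱ of 3-graphs does not satisfy a palette 𝒫 (i.e., no member of ℱ satisfies 𝒫), then π_{ee}(ℱ) ≥ Λ^{ee}_𝒫. -/

import Mathlib

open Finset

/-- A 3-uniform hypergraph: a finite vertex set (of naturals) together with a set of
3-element subsets of it as edges. -/
structure ThreeGraph where
  verts : Finset ℕ
  edges : Finset (Finset ℕ)
  edge_sub : ∀ e ∈ edges, e ⊆ verts
  edge_card : ∀ e ∈ edges, e.card = 3

/-- `F` occurs as a subhypergraph of `H`. -/
def IsSubhypergraph (F H : ThreeGraph) : Prop :=
  ∃ f : ℕ → ℕ, Set.InjOn f ↑F.verts ∧ (∀ v ∈ F.verts, f v ∈ H.verts) ∧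
    ∀ e ∈ F.edges, e.image f ∈ H.edges

noncomputable section

/-- Number of triples `(x,y,z) ∈ X × Y × Z` with `{x,y,z}` an edge of `H`. -/
def eVVV (H : ThreeGraph) (X Y Z : Finset ℕ) : ℕ :=
  ((X ×ˢ Y ×ˢ Z).filter fun p => ({p.1, p.2.1, p.2.2} : Finset ℕ) ∈ H.edges).card

/-- `H` is `(d,η,▽)`-dense. -/
def IsDenseVVV (H : ThreeGraph) (d η : ℝ) : Prop :=
  ∀ X Y Z : Finset ℕ, X ⊆ H.verts → Y ⊆ H.verts → Z ⊆ H.verts →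
    (eVVV H X Y Z : ℝ) ≥ d * X.card * Y.card * Z.card - η * (H.verts.card : ℝ) ^ 3

/-- Number of ordered triples `(x,y,z)` with `x ∈ X`, `{y,z} ∈ P` and `{x,y,z}` an edge. -/
def eEV (H : ThreeGraph) (X : Finset ℕ) (P : Finset (Finset ℕ)) : ℕ :=
  ((X ×ˢ H.verts ×ˢ H.verts).filter fun p =>
    ({p.2.1, p.2.2} : Finset ℕ) ∈ P ∧ ({p.1, p.2.1, p.2.2} : Finset ℕ) ∈ H.edges).card

/-- `H` is `(d,η,e↦v)`-dense. -/
def IsDenseEV (H : ThreeGraph) (d η : ℝ) : Prop :=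
  ∀ (X : Finset ℕ) (P : Finset (Finset ℕ)), X ⊆ H.verts →
    (∀ p ∈ P, p ⊆ H.verts ∧ p.card = 2) →
    (eEV H X P : ℝ) ≥ d * X.card * P.card - η * (H.verts.card : ℝ) ^ 3

/-- `K_{ee}(P,Q)`: ordered triples `(x,y,z)` with `{x,y} ∈ P` and `{y,z} ∈ Q`. -/
def KEE (H : ThreeGraph) (P Q : Finset (Finset ℕ)) : Finset (ℕ × ℕ × ℕ) :=
  (H.verts ×ˢ H.verts ×ˢ H.verts).filter fun p =>
    ({p.1, p.2.1} : Finset ℕ) ∈ P ∧ ({p.2.1, p.2.2} : Finset ℕ) ∈ Q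

/-- Number of triples in `K_{ee}(P,Q)` forming an edge of `H`. -/
def eEE (H : ThreeGraph) (P Q : Finset (Finset ℕ)) : ℕ :=
  ((KEE H P Q).filter fun p => ({p.1, p.2.1, p.2.2} : Finset ℕ) ∈ H.edges).card

/-- `H` is `(d,η,ee)`-dense. -/
def IsDenseEE (H : ThreeGraph) (d η : ℝ) : Prop :=
  ∀ P Q : Finset (Finset ℕ),
    (∀ p ∈ P, p ⊆ H.verts ∧ p.card = 2) → (∀ q ∈ Q, q ⊆ H.verts ∧ q.card = 2) →
    (eEE H P Q : ℝ) ≥ d * (KEE H P Q).card - η * (H.verts.card : ℝ) ^ 3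

/-- The uniform Turán density `π_▽(𝓕)` of a family `𝓕` of 3-graphs. -/
def piVVV (𝓕 : Set ThreeGraph) : ℝ :=
  sSup {d : ℝ | 0 ≤ d ∧ d ≤ 1 ∧ ∀ η : ℝ, 0 < η → ∀ n : ℕ,
    ∃ H : ThreeGraph, n ≤ H.verts.card ∧ (∀ F ∈ 𝓕, ¬ IsSubhypergraph F H) ∧
      IsDenseVVV H d η}

/-- The uniform Turán density `π_{e↦v}(𝓕)` of a family `𝓕` of 3-graphs. -/
def piEV (𝓕 : Set ThreeGraph) : ℝ :=
  sSup {d : ℝ | 0 ≤ d ∧ d ≤ 1 ∧ ∀ η : ℝ, 0 < η → ∀ n : ℕ,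
    ∃ H : ThreeGraph, n ≤ H.verts.card ∧ (∀ F ∈ 𝓕, ¬ IsSubhypergraph F H) ∧
      IsDenseEV H d η}

/-- The uniform Turán density `π_{ee}(𝓕)` of a family `𝓕` of 3-graphs. -/
def piEE (𝓕 : Set ThreeGraph) : ℝ :=
  sSup {d : ℝ | 0 ≤ d ∧ d ≤ 1 ∧ ∀ η : ℝ, 0 < η → ∀ n : ℕ,
    ∃ H : ThreeGraph, n ≤ H.verts.card ∧ (∀ F ∈ 𝓕, ¬ IsSubhypergraph F H) ∧
      IsDenseEE H d η}

/-- A palette: a finite set of ordered triples of natural numbers (colours). -/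
abbrev Palette := Finset (ℕ × ℕ × ℕ)

/-- The set of colours `Φ(𝒫)` of a palette. -/
def palColours (P : Palette) : Finset ℕ :=
  P.image (·.1) ∪ P.image (·.2.1) ∪ P.image (·.2.2)

/-- A weighting of a palette: nonnegative weights on the colours summing to 1. -/
def IsWeighting (P : Palette) (x : ℕ → ℝ) : Prop :=
  (∀ a ∈ palColours P, 0 ≤ x a) ∧ ∑ a ∈ palColours P, x a = 1

/-- `λ^▽_𝒫(x) = Σ_{(a,b,c) ∈ 𝒫} x_a x_b x_c`. -/
def lamVVV (P : Palette) (x : ℕ → ℝ) : ℝ :=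
  ∑ p ∈ P, x p.1 * x p.2.1 * x p.2.2

/-- The palette Lagrangian `Λ^▽_𝒫`. -/
def LambdaVVV (P : Palette) : ℝ :=
  sSup {l : ℝ | ∃ x : ℕ → ℝ, IsWeighting P x ∧ l = lamVVV P x}

/-- The ordered degree Lagrangian `λ^a_𝒫(x)`. -/
def lamDeg (P : Palette) (a : ℕ) (x : ℕ → ℝ) : ℝ :=
  min (min (∑ p ∈ P.filter (fun p => p.1 = a), x p.2.1 * x p.2.2)
           (∑ p ∈ P.filter (fun p => p.2.1 = a), x p.1 * x p.2.2))
      (∑ p ∈ P.filter (fun p => p.2.2 = a), x p.1 * x p.2.1)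

/-- `λ^{e↦v}_𝒫(x)`: minimum of `λ^a_𝒫(x)` over colours `a` with positive weight. -/
def lamEV (P : Palette) (x : ℕ → ℝ) : ℝ :=
  sInf {l : ℝ | ∃ a ∈ palColours P, 0 < x a ∧ l = lamDeg P a x}

/-- The palette Lagrangian `Λ^{e↦v}_𝒫`. -/
def LambdaEV (P : Palette) : ℝ :=
  sSup {l : ℝ | ∃ x : ℕ → ℝ, IsWeighting P x ∧ l = lamEV P x}

/-- The ordered codegree Lagrangian `λ^{a,b}_𝒫(x)`. -/
def lamCodeg (P : Palette) (a b : ℕ) (x : ℕ → ℝ) : ℝ :=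
  min (min (min (∑ p ∈ P.filter (fun p => p.1 = a ∧ p.2.1 = b), x p.2.2)
                (∑ p ∈ P.filter (fun p => p.1 = b ∧ p.2.1 = a), x p.2.2))
           (min (∑ p ∈ P.filter (fun p => p.1 = a ∧ p.2.2 = b), x p.2.1)
                (∑ p ∈ P.filter (fun p => p.1 = b ∧ p.2.2 = a), x p.2.1)))
      (min (∑ p ∈ P.filter (fun p => p.2.1 = a ∧ p.2.2 = b), x p.1)
           (∑ p ∈ P.filter (fun p => p.2.1 = b ∧ p.2.2 = a), x p.1))

/-- `λ^{ee}_𝒫(x)`: minimum of `λ^{a,b}_𝒫(x)` over colours `a,b` with positive weight. -/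
def lamEE (P : Palette) (x : ℕ → ℝ) : ℝ :=
  sInf {l : ℝ | ∃ a ∈ palColours P, ∃ b ∈ palColours P, 0 < x a * x b ∧ l = lamCodeg P a b x}

/-- The palette Lagrangian `Λ^{ee}_𝒫`. -/
def LambdaEE (P : Palette) : ℝ :=
  sSup {l : ℝ | ∃ x : ℕ → ℝ, IsWeighting P x ∧ l = lamEE P x}

/-- A 3-graph `H` satisfies a palette `P`: there is an ordering of the vertices (an
injection `ord` into `ℕ`) and a colouring `φ` of the pairs of vertices with colours in
`Φ(P)` such that the ordered shadow of every edge is a triple of the palette. -/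
def Satisfies (H : ThreeGraph) (P : Palette) : Prop :=
  ∃ (ord : ℕ → ℕ) (φ : Finset ℕ → ℕ),
    Set.InjOn ord ↑H.verts ∧
    (∀ u ∈ H.verts, ∀ v ∈ H.verts, u ≠ v → φ {u, v} ∈ palColours P) ∧
    ∀ u v w : ℕ, ({u, v, w} : Finset ℕ) ∈ H.edges →
      ord u < ord v → ord v < ord w →
      (φ {u, v}, φ {v, w}, φ {u, w}) ∈ P

/-- Delete a set of edges from a 3-graph. -/
def ThreeGraph.deleteEdges (H : ThreeGraph) (R : Finset (Finset ℕ)) : ThreeGraph where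
  verts := H.verts
  edges := H.edges \ R
  edge_sub := fun e he => H.edge_sub e (Finset.mem_sdiff.mp he).1
  edge_card := fun e he => H.edge_card e (Finset.mem_sdiff.mp he).1

/-- `H` α-almost satisfies `P`: one can remove at most `α·|V(H)|³` edges so that the
resulting 3-graph satisfies `P`. -/
def AlmostSatisfies (H : ThreeGraph) (P : Palette) (α : ℝ) : Prop :=
  ∃ R ⊆ H.edges, (R.card : ℝ) ≤ α * (H.verts.card : ℝ) ^ 3 ∧
    Satisfies (H.deleteEdges R) P

/-- The Lagrange polynomial `λ_F(x) = 3! Σ_{e ∈ E(F)} Π_{v ∈ e} x_v` of a 3-graph. -/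
def lagrangePoly (F : ThreeGraph) (x : ℕ → ℝ) : ℝ :=
  6 * ∑ e ∈ F.edges, ∏ v ∈ e, x v

/-- The Lagrangian `Λ_F` of a 3-graph: the supremum of the Lagrange polynomial over the
standard simplex on the vertices. -/
def lagrangian (F : ThreeGraph) : ℝ :=
  sSup {l : ℝ | ∃ x : ℕ → ℝ, (∀ v ∈ F.verts, 0 ≤ x v ∧ x v ≤ 1) ∧
    (∑ v ∈ F.verts, x v = 1) ∧ l = lagrangePoly F x}

end

namespace PLB
open Finset

noncomputable section

/-! ### Scalar lemmas -/

lemma exp_le_quad {u : ℝ} (h : |u| ≤ 1/2) : Real.exp u ≤ 1 + u + 2*u^2 := by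
  have h1 : u ≤ 1/2 := (abs_le.mp h).2
  have h2 : -(1/2) ≤ u := (abs_le.mp h).1
  have hpos : (0:ℝ) < 1 - u := by linarith
  have key : Real.exp u ≤ (1 - u)⁻¹ := by
    have h0 := Real.add_one_le_exp (-u)
    rw [Real.exp_neg] at h0
    have hexp : (0:ℝ) < Real.exp u := Real.exp_pos u
    have hmul : Real.exp u * (Real.exp u)⁻¹ = 1 := mul_inv_cancel₀ (ne_of_gt hexp)
    have h3 : Real.exp u * (1 - u) ≤ 1 := by nlinarith
    rw [← one_div, le_div_iff₀ hpos]
    linarith [h3]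
  refine key.trans ?_
  rw [inv_le_iff_one_le_mul₀ hpos]
  nlinarith

lemma nat_four_pow_lt (ε : ℝ) (hε : 0 < ε) :
    ∃ M : ℕ, ∀ m : ℕ, M ≤ m →
      (m:ℝ) * 2^m * 2^m * Real.exp (-(ε^2 * m^2)/32) < 1 := by
  obtain ⟨M, hM⟩ := exists_nat_gt (96 / ε^2)
  refine ⟨M + 1, fun m hm => ?_⟩
  have hm1 : (1:ℝ) ≤ m := by
    have : 1 ≤ m := le_trans (Nat.le_add_left 1 M) hm
    exact_mod_cast this
  have hmM : (96:ℝ) / ε^2 < m := lt_of_lt_of_le hM (by exact_mod_cast le_trans (Nat.le_succ M) hm)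
  have he2 : (2:ℝ) < Real.exp 1 := lt_trans (by norm_num) Real.exp_one_gt_d9
  have hmexp : (m:ℝ) < Real.exp m := by
    have := Real.add_one_le_exp (m:ℝ)
    linarith
  have h2exp : (2:ℝ)^m ≤ Real.exp m := by
    calc (2:ℝ)^m ≤ (Real.exp 1)^m := pow_le_pow_left₀ (by norm_num) he2.le m
    _ = Real.exp m := by rw [← Real.exp_nat_mul]; ring_nf
  have key : (m:ℝ) * 2^m * 2^m < Real.exp (3*m) := by
    have e1 : Real.exp (3*(m:ℝ)) = Real.exp m * Real.exp m * Real.exp m := by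
      rw [← Real.exp_add, ← Real.exp_add]; ring_nf
    rw [e1]
    have p1 : (0:ℝ) < 2^m := by positivity
    have hE : (0:ℝ) < Real.exp (m:ℝ) := Real.exp_pos _
    calc (m:ℝ) * 2^m * 2^m < Real.exp m * 2^m * 2^m := by
          apply mul_lt_mul_of_pos_right (mul_lt_mul_of_pos_right hmexp p1) p1
      _ ≤ Real.exp m * Real.exp m * Real.exp m := by
          apply mul_le_mul (mul_le_mul_of_nonneg_left h2exp hE.le) h2exp p1.le
          positivity
  have key2 : Real.exp (3*(m:ℝ)) * Real.exp (-(ε^2 * m^2)/32) ≤ 1 := by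
    rw [← Real.exp_add, ← Real.exp_zero]
    apply Real.exp_le_exp.mpr
    have hε2 : (0:ℝ) < ε^2 := by positivity
    have : 96 < ε^2 * m := by
      rw [div_lt_iff₀ hε2] at hmM
      nlinarith
    nlinarith
  have hp : (0:ℝ) < Real.exp (-(ε^2 * m^2)/32) := Real.exp_pos _
  calc (m:ℝ) * 2^m * 2^m * Real.exp (-(ε^2 * m^2)/32)
      < Real.exp (3*m) * Real.exp (-(ε^2 * m^2)/32) := by
        apply mul_lt_mul_of_pos_right key hp
    _ ≤ 1 := key2

end
end PLB


namespace PLB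
open Finset

noncomputable section

variable (P : Palette) (x : ℕ → ℝ)

/-- Support of the weighting. -/
def supp : Finset ℕ := (palColours P).filter (fun a => 0 < x a)

variable {P x}

lemma fst_mem_palColours {p : ℕ × ℕ × ℕ} (hp : p ∈ P) : p.1 ∈ palColours P := by
  unfold palColours
  simp only [mem_union, mem_image]
  exact Or.inl (Or.inl ⟨p, hp, rfl⟩)

lemma snd_mem_palColours {p : ℕ × ℕ × ℕ} (hp : p ∈ P) : p.2.1 ∈ palColours P := by
  unfold palColours
  simp only [mem_union, mem_image]
  exact Or.inl (Or.inr ⟨p, hp, rfl⟩)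

lemma thd_mem_palColours {p : ℕ × ℕ × ℕ} (hp : p ∈ P) : p.2.2 ∈ palColours P := by
  unfold palColours
  simp only [mem_union, mem_image]
  exact Or.inr ⟨p, hp, rfl⟩

lemma x_pos_of_supp {a : ℕ} (ha : a ∈ supp P x) : 0 < x a := (mem_filter.mp ha).2

lemma supp_subset_palColours : supp P x ⊆ palColours P := filter_subset _ _

section Weighting
variable (hw : IsWeighting P x)
include hw

lemma x_zero_of_not_supp {a : ℕ} (ha : a ∈ palColours P) (hns : a ∉ supp P x) : x a = 0 := by
  have h1 := hw.1 a ha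
  by_contra hne
  exact hns (mem_filter.mpr ⟨ha, lt_of_le_of_ne h1 (Ne.symm hne)⟩)

lemma sum_supp_eq_one : ∑ a ∈ supp P x, x a = 1 := by
  rw [← hw.2]
  apply Finset.sum_subset (filter_subset _ _)
  intro a ha hns
  exact x_zero_of_not_supp hw ha hns

lemma exists_supp : ∃ a, a ∈ supp P x := by
  by_contra hn
  push_neg at hn
  have : ∑ a ∈ supp P x, x a = 0 := Finset.sum_eq_zero (fun a ha => absurd ha (hn a))
  rw [sum_supp_eq_one hw] at this
  norm_num at this

lemma sum_ind_1 (a b : ℕ) :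
    ∑ c ∈ supp P x, x c * (if (a,b,c) ∈ P then (1:ℝ) else 0)
      = ∑ p ∈ P.filter (fun p => p.1 = a ∧ p.2.1 = b), x p.2.2 := by
  have h1 : ∑ c ∈ supp P x, x c * (if (a,b,c) ∈ P then (1:ℝ) else 0)
      = ∑ c ∈ (supp P x).filter (fun c => (a,b,c) ∈ P), x c := by
    simp only [mul_ite, mul_one, mul_zero]
    rw [Finset.sum_filter]
  have hinj : ∀ p ∈ P.filter (fun p => p.1 = a ∧ p.2.1 = b),
      ∀ q ∈ P.filter (fun p => p.1 = a ∧ p.2.1 = b), p.2.2 = q.2.2 → p = q := by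
    intro p hp q hq hpq
    rw [mem_filter] at hp hq
    obtain ⟨p1, p21, p22⟩ := p
    obtain ⟨q1, q21, q22⟩ := q
    simp_all
  have h2 : ∑ p ∈ P.filter (fun p => p.1 = a ∧ p.2.1 = b), x p.2.2
      = ∑ c ∈ (P.filter (fun p => p.1 = a ∧ p.2.1 = b)).image (fun p => p.2.2), x c :=
    (Finset.sum_image hinj).symm
  rw [h1, h2]
  apply Finset.sum_subset
  · intro c hc
    rw [mem_filter] at hc
    exact mem_image.mpr ⟨(a,b,c), mem_filter.mpr ⟨hc.2, rfl, rfl⟩, rfl⟩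
  · intro c hc hnc
    rw [mem_image] at hc
    obtain ⟨p, hp, hpc⟩ := hc
    rw [mem_filter] at hp
    obtain ⟨hpP, hp1, hp2⟩ := hp
    have hpeq : p = (a,b,c) := by
      obtain ⟨p1, p21, p22⟩ := p
      simp_all
    rw [hpeq] at hpP
    apply x_zero_of_not_supp hw (thd_mem_palColours hpP)
    intro hcs
    exact hnc (mem_filter.mpr ⟨hcs, hpP⟩)

lemma sum_ind_2 (a b : ℕ) :
    ∑ c ∈ supp P x, x c * (if (a,c,b) ∈ P then (1:ℝ) else 0)
      = ∑ p ∈ P.filter (fun p => p.1 = a ∧ p.2.2 = b), x p.2.1 := by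
  have h1 : ∑ c ∈ supp P x, x c * (if (a,c,b) ∈ P then (1:ℝ) else 0)
      = ∑ c ∈ (supp P x).filter (fun c => (a,c,b) ∈ P), x c := by
    simp only [mul_ite, mul_one, mul_zero]
    rw [Finset.sum_filter]
  have hinj : ∀ p ∈ P.filter (fun p => p.1 = a ∧ p.2.2 = b),
      ∀ q ∈ P.filter (fun p => p.1 = a ∧ p.2.2 = b), p.2.1 = q.2.1 → p = q := by
    intro p hp q hq hpq
    rw [mem_filter] at hp hq
    obtain ⟨p1, p21, p22⟩ := p
    obtain ⟨q1, q21, q22⟩ := q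
    simp_all
  have h2 : ∑ p ∈ P.filter (fun p => p.1 = a ∧ p.2.2 = b), x p.2.1
      = ∑ c ∈ (P.filter (fun p => p.1 = a ∧ p.2.2 = b)).image (fun p => p.2.1), x c :=
    (Finset.sum_image hinj).symm
  rw [h1, h2]
  apply Finset.sum_subset
  · intro c hc
    rw [mem_filter] at hc
    exact mem_image.mpr ⟨(a,c,b), mem_filter.mpr ⟨hc.2, rfl, rfl⟩, rfl⟩
  · intro c hc hnc
    rw [mem_image] at hc
    obtain ⟨p, hp, hpc⟩ := hc
    rw [mem_filter] at hp
    obtain ⟨hpP, hp1, hp2⟩ := hp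
    have hpeq : p = (a,c,b) := by
      obtain ⟨p1, p21, p22⟩ := p
      simp_all
    rw [hpeq] at hpP
    apply x_zero_of_not_supp hw (snd_mem_palColours hpP)
    intro hcs
    exact hnc (mem_filter.mpr ⟨hcs, hpP⟩)

lemma sum_ind_3 (a b : ℕ) :
    ∑ c ∈ supp P x, x c * (if (c,a,b) ∈ P then (1:ℝ) else 0)
      = ∑ p ∈ P.filter (fun p => p.2.1 = a ∧ p.2.2 = b), x p.1 := by
  have h1 : ∑ c ∈ supp P x, x c * (if (c,a,b) ∈ P then (1:ℝ) else 0)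
      = ∑ c ∈ (supp P x).filter (fun c => (c,a,b) ∈ P), x c := by
    simp only [mul_ite, mul_one, mul_zero]
    rw [Finset.sum_filter]
  have hinj : ∀ p ∈ P.filter (fun p => p.2.1 = a ∧ p.2.2 = b),
      ∀ q ∈ P.filter (fun p => p.2.1 = a ∧ p.2.2 = b), p.1 = q.1 → p = q := by
    intro p hp q hq hpq
    rw [mem_filter] at hp hq
    obtain ⟨p1, p21, p22⟩ := p
    obtain ⟨q1, q21, q22⟩ := q
    simp_all
  have h2 : ∑ p ∈ P.filter (fun p => p.2.1 = a ∧ p.2.2 = b), x p.1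
      = ∑ c ∈ (P.filter (fun p => p.2.1 = a ∧ p.2.2 = b)).image (fun p => p.1), x c :=
    (Finset.sum_image hinj).symm
  rw [h1, h2]
  apply Finset.sum_subset
  · intro c hc
    rw [mem_filter] at hc
    exact mem_image.mpr ⟨(c,a,b), mem_filter.mpr ⟨hc.2, rfl, rfl⟩, rfl⟩
  · intro c hc hnc
    rw [mem_image] at hc
    obtain ⟨p, hp, hpc⟩ := hc
    rw [mem_filter] at hp
    obtain ⟨hpP, hp1, hp2⟩ := hp
    have hpeq : p = (c,a,b) := by
      obtain ⟨p1, p21, p22⟩ := p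
      simp_all
    rw [hpeq] at hpP
    apply x_zero_of_not_supp hw (fst_mem_palColours hpP)
    intro hcs
    exact hnc (mem_filter.mpr ⟨hcs, hpP⟩)

lemma lamCodeg_nonneg (a b : ℕ) : 0 ≤ lamCodeg P a b x := by
  unfold lamCodeg
  have key : ∀ (s : Finset (ℕ×ℕ×ℕ)) (f : ℕ×ℕ×ℕ → ℕ), s ⊆ P →
      (∀ p ∈ P, f p ∈ palColours P) → (0:ℝ) ≤ ∑ p ∈ s, x (f p) := by
    intro s f hs hf
    apply Finset.sum_nonneg
    intro p hp
    exact hw.1 _ (hf p (hs hp))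
  refine le_min (le_min (le_min ?_ ?_) (le_min ?_ ?_)) (le_min ?_ ?_) <;>
    first
      | exact key _ _ (filter_subset _ _) (fun p hp => thd_mem_palColours hp)
      | exact key _ _ (filter_subset _ _) (fun p hp => snd_mem_palColours hp)
      | exact key _ _ (filter_subset _ _) (fun p hp => fst_mem_palColours hp)

lemma sum_filter_le_one (a b : ℕ) :
    ∑ p ∈ P.filter (fun p => p.1 = a ∧ p.2.1 = b), x p.2.2 ≤ 1 := by
  rw [← sum_ind_1 hw a b]
  calc ∑ c ∈ supp P x, x c * (if (a,b,c) ∈ P then (1:ℝ) else 0)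
      ≤ ∑ c ∈ supp P x, x c := by
        apply Finset.sum_le_sum
        intro c hc
        have hxc := (x_pos_of_supp hc).le
        exact mul_le_of_le_one_right hxc (by split <;> norm_num)
    _ = 1 := sum_supp_eq_one hw

lemma lamCodeg_le_one (a b : ℕ) : lamCodeg P a b x ≤ 1 := by
  unfold lamCodeg
  exact le_trans (((min_le_left _ _).trans (min_le_left _ _)).trans (min_le_left _ _))
    (sum_filter_le_one hw a b)

lemma lamEE_bddBelow : BddBelow {l : ℝ | ∃ a ∈ palColours P, ∃ b ∈ palColours P,
    0 < x a * x b ∧ l = lamCodeg P a b x} := by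
  refine ⟨0, ?_⟩
  rintro l ⟨a, ha, b, hb, hpos, rfl⟩
  exact lamCodeg_nonneg hw a b

lemma lamEE_le_lamCodeg {a b : ℕ} (ha : a ∈ palColours P) (hb : b ∈ palColours P)
    (hpos : 0 < x a * x b) : lamEE P x ≤ lamCodeg P a b x := by
  apply csInf_le (lamEE_bddBelow hw)
  exact ⟨a, ha, b, hb, hpos, rfl⟩

lemma lamEE_le_one : lamEE P x ≤ 1 := by
  obtain ⟨a, ha⟩ := exists_supp hw
  have hpos : 0 < x a * x a := mul_pos (x_pos_of_supp ha) (x_pos_of_supp ha)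
  exact le_trans (lamEE_le_lamCodeg hw (supp_subset_palColours ha)
    (supp_subset_palColours ha) hpos) (lamCodeg_le_one hw a a)

end Weighting

end
end PLB


namespace PLB
open Finset

noncomputable section
attribute [local instance] Classical.propDecidable

/-- The pairs of vertices of `range m`. -/
def pairsm (m : ℕ) : Finset (Finset ℕ) := (range m).powersetCard 2

/-- Index type for pairs. -/
abbrev Idx (m : ℕ) := {e : Finset ℕ // e ∈ pairsm m}

/-- Sample space of colourings. -/
def Omega (P : Palette) (x : ℕ → ℝ) (m : ℕ) : Finset (Idx m → ℕ) :=
  Fintype.piFinset (fun _ => supp P x)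

/-- Colouring of all pairs induced by a point of the sample space. -/
def phig {m : ℕ} (g : Idx m → ℕ) (e : Finset ℕ) : ℕ :=
  if h : e ∈ pairsm m then g ⟨e, h⟩ else 0

def cpair {m : ℕ} (g : Idx m → ℕ) (u v : ℕ) : ℕ := phig g {u, v}

lemma pair_mem_pairsm {m u v : ℕ} (huv : u ≠ v) (hu : u < m) (hv : v < m) :
    ({u, v} : Finset ℕ) ∈ pairsm m := by
  rw [pairsm, mem_powersetCard]
  constructor
  · intro t ht
    rw [mem_insert, mem_singleton] at ht
    rcases ht with rfl | rfl <;> simp [mem_range, hu, hv]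
  · exact Finset.card_pair huv

lemma cpair_comm {m : ℕ} (g : Idx m → ℕ) (u v : ℕ) : cpair g u v = cpair g v u := by
  unfold cpair
  rw [pair_comm]

lemma cpair_mem_supp {P : Palette} {x : ℕ → ℝ} {m : ℕ} {g : Idx m → ℕ}
    (hg : g ∈ Omega P x m) {u v : ℕ} (huv : u ≠ v) (hu : u < m) (hv : v < m) :
    cpair g u v ∈ supp P x := by
  rw [cpair, phig, dif_pos (pair_mem_pairsm huv hu hv)]
  exact Fintype.mem_piFinset.mp hg _

/-- Ordered pattern triple of a cherry `(u,v,w)` with leg colours `a = φ{u,v}`,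
`b = φ{v,w}` and top colour `c = φ{u,w}`. -/
def trip (u v w a b c : ℕ) : ℕ × ℕ × ℕ :=
  if u < v ∧ v < w then (a, b, c)
  else if w < v ∧ v < u then (b, a, c)
  else if u < w ∧ w < v then (c, b, a)
  else if v < u ∧ u < w then (a, c, b)
  else if v < w ∧ w < u then (b, c, a)
  else (c, a, b)

lemma trip_1 {u v w : ℕ} (h1 : u < v) (h2 : v < w) (a b c : ℕ) :
    trip u v w a b c = (a, b, c) := by unfold trip; rw [if_pos ⟨h1, h2⟩]

lemma trip_2 {u v w : ℕ} (h1 : w < v) (h2 : v < u) (a b c : ℕ) :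
    trip u v w a b c = (b, a, c) := by
  unfold trip; rw [if_neg (by omega), if_pos ⟨h1, h2⟩]

lemma trip_3 {u v w : ℕ} (h1 : u < w) (h2 : w < v) (a b c : ℕ) :
    trip u v w a b c = (c, b, a) := by
  unfold trip; rw [if_neg (by omega), if_neg (by omega), if_pos ⟨h1, h2⟩]

lemma trip_4 {u v w : ℕ} (h1 : v < u) (h2 : u < w) (a b c : ℕ) :
    trip u v w a b c = (a, c, b) := by
  unfold trip; rw [if_neg (by omega), if_neg (by omega), if_neg (by omega), if_pos ⟨h1, h2⟩]

lemma trip_5 {u v w : ℕ} (h1 : v < w) (h2 : w < u) (a b c : ℕ) :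
    trip u v w a b c = (b, c, a) := by
  unfold trip
  rw [if_neg (by omega), if_neg (by omega), if_neg (by omega), if_neg (by omega),
    if_pos ⟨h1, h2⟩]

lemma trip_6 {u v w : ℕ} (h1 : w < u) (h2 : u < v) (a b c : ℕ) :
    trip u v w a b c = (c, a, b) := by
  unfold trip
  rw [if_neg (by omega), if_neg (by omega), if_neg (by omega), if_neg (by omega),
    if_neg (by omega)]

/-- The indicator that the pattern of the cherry lies in the palette. -/
def zval (P : Palette) (u v w a b c : ℕ) : ℝ := if trip u v w a b c ∈ P then 1 else 0

/-- Conditional probability that the cherry `(u,v,w)` with leg colours `a, b` forms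
an edge. -/
def hval (P : Palette) (x : ℕ → ℝ) (u v w a b : ℕ) : ℝ :=
  ∑ c ∈ supp P x, x c * zval P u v w a b c

/-- The mean-zero part of the edge indicator of a cherry. -/
def Dg (P : Palette) (x : ℕ → ℝ) {m : ℕ} (g : Idx m → ℕ) (u v w : ℕ) : ℝ :=
  zval P u v w (cpair g u v) (cpair g v w) (cpair g u w)
    - hval P x u v w (cpair g u v) (cpair g v w)

/-- The random hypergraph. -/
def HH (P : Palette) {m : ℕ} (g : Idx m → ℕ) : ThreeGraph where
  verts := range m
  edges := Finset.filter
    (fun e => ∀ i j k : ℕ, i < j → j < k → e = {i, j, k} →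
      (cpair g i j, cpair g j k, cpair g i k) ∈ P) ((range m).powersetCard 3)
  edge_sub := fun e he => (mem_powersetCard.mp (mem_filter.mp he).1).1
  edge_card := fun e he => (mem_powersetCard.mp (mem_filter.mp he).1).2

lemma sorted_triple_eq {i j k i' j' k' : ℕ} (h1 : i < j) (h2 : j < k)
    (h1' : i' < j') (h2' : j' < k') (hs : ({i,j,k} : Finset ℕ) = {i',j',k'}) :
    i = i' ∧ j = j' ∧ k = k' := by
  have key : ∀ t : ℕ, (t = i ∨ t = j ∨ t = k) ↔ (t = i' ∨ t = j' ∨ t = k') := by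
    intro t
    have := Finset.ext_iff.mp hs t
    simpa using this
  have ki := (key i).mp (Or.inl rfl)
  have kj := (key j).mp (Or.inr (Or.inl rfl))
  have kk := (key k).mp (Or.inr (Or.inr rfl))
  have ki' := (key i').mpr (Or.inl rfl)
  have kj' := (key j').mpr (Or.inr (Or.inl rfl))
  have kk' := (key k').mpr (Or.inr (Or.inr rfl))
  omega

lemma triple_card {i j k : ℕ} (h1 : i < j) (h2 : j < k) :
    ({i,j,k} : Finset ℕ).card = 3 :=
  Finset.card_eq_three.mpr ⟨i, j, k, by omega, by omega, by omega, rfl⟩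

lemma triple_subset {m i j k : ℕ} (hi : i < m) (hj : j < m) (hk : k < m) :
    ({i,j,k} : Finset ℕ) ⊆ range m := by
  intro t ht
  simp only [mem_insert, mem_singleton] at ht
  rcases ht with rfl | rfl | rfl <;> simpa [mem_range]

lemma edge_iff_sorted {P : Palette} {m : ℕ} (g : Idx m → ℕ) {i j k : ℕ}
    (h1 : i < j) (h2 : j < k) (hk : k < m) :
    ({i,j,k} : Finset ℕ) ∈ (HH P g).edges ↔ (cpair g i j, cpair g j k, cpair g i k) ∈ P := by
  constructor
  · intro h
    exact (mem_filter.mp h).2 i j k h1 h2 rfl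
  · intro h
    rw [HH, mem_filter]
    refine ⟨mem_powersetCard.mpr ⟨triple_subset (by omega) (by omega) hk, triple_card h1 h2⟩, ?_⟩
    intro i' j' k' h1' h2' heq
    obtain ⟨rfl, rfl, rfl⟩ := sorted_triple_eq h1' h2' h1 h2 heq.symm
    exact h

lemma edge_iff_zval {P : Palette} {m : ℕ} (g : Idx m → ℕ) {u v w : ℕ}
    (huv : u ≠ v) (hvw : v ≠ w) (huw : u ≠ w) (hu : u < m) (hv : v < m) (hw : w < m) :
    (({u,v,w} : Finset ℕ) ∈ (HH P g).edges) ↔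
      trip u v w (cpair g u v) (cpair g v w) (cpair g u w) ∈ P := by
  have setswap : ∀ a b c : ℕ, ∀ a' b' c' : ℕ,
      (a = a' ∨ a = b' ∨ a = c') → (b = a' ∨ b = b' ∨ b = c') → (c = a' ∨ c = b' ∨ c = c') →
      (a' = a ∨ a' = b ∨ a' = c) → (b' = a ∨ b' = b ∨ b' = c) → (c' = a ∨ c' = b ∨ c' = c) →
      ({a,b,c} : Finset ℕ) = {a',b',c'} := by
    intro a b c a' b' c' p1 p2 p3 q1 q2 q3
    ext t
    simp only [mem_insert, mem_singleton]
    constructor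
    · rintro (rfl | rfl | rfl) <;> tauto
    · rintro (rfl | rfl | rfl) <;> tauto
  rcases lt_trichotomy u v with h | h | h
  · rcases lt_trichotomy v w with h' | h' | h'
    · -- u < v < w
      rw [trip_1 h h', edge_iff_sorted g h h' hw]
    · exact absurd h' hvw
    · rcases lt_trichotomy u w with h'' | h'' | h''
      · -- u < w < v
        rw [trip_3 h'' h']
        have hset : ({u,v,w} : Finset ℕ) = {u,w,v} := setswap _ _ _ _ _ _
          (by tauto) (by tauto) (by tauto) (by tauto) (by tauto) (by tauto)
        rw [hset, edge_iff_sorted g h'' h' hv, cpair_comm g w v]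
      · exact absurd h'' huw
      · -- w < u < v
        rw [trip_6 h'' h]
        have hset : ({u,v,w} : Finset ℕ) = {w,u,v} := setswap _ _ _ _ _ _
          (by tauto) (by tauto) (by tauto) (by tauto) (by tauto) (by tauto)
        rw [hset, edge_iff_sorted g h'' h hv, cpair_comm g w u, cpair_comm g w v]
  · exact absurd h huv
  · rcases lt_trichotomy v w with h' | h' | h'
    · rcases lt_trichotomy u w with h'' | h'' | h''
      · -- v < u < w
        rw [trip_4 h h'']
        have hset : ({u,v,w} : Finset ℕ) = {v,u,w} := setswap _ _ _ _ _ _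
          (by tauto) (by tauto) (by tauto) (by tauto) (by tauto) (by tauto)
        rw [hset, edge_iff_sorted g h h'' hw, cpair_comm g v u]
      · exact absurd h'' huw
      · -- v < w < u
        rw [trip_5 h' h'']
        have hset : ({u,v,w} : Finset ℕ) = {v,w,u} := setswap _ _ _ _ _ _
          (by tauto) (by tauto) (by tauto) (by tauto) (by tauto) (by tauto)
        rw [hset, edge_iff_sorted g h' h'' hu, cpair_comm g v u, cpair_comm g w u]
    · exact absurd h' hvw
    · -- w < v < u
      rw [trip_2 h' h]
      have hset : ({u,v,w} : Finset ℕ) = {w,v,u} := setswap _ _ _ _ _ _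
        (by tauto) (by tauto) (by tauto) (by tauto) (by tauto) (by tauto)
      rw [hset, edge_iff_sorted g h' h hu, cpair_comm g w v, cpair_comm g v u, cpair_comm g w u]

end
end PLB


namespace PLB
open Finset

noncomputable section

variable {P : Palette} {x : ℕ → ℝ}

lemma zval_nonneg (u v w a b c : ℕ) : 0 ≤ zval P u v w a b c := by
  rw [zval]; split <;> norm_num

lemma zval_le_one (u v w a b c : ℕ) : zval P u v w a b c ≤ 1 := by
  rw [zval]; split <;> norm_num

lemma hval_nonneg (u v w a b : ℕ) : 0 ≤ hval P x u v w a b := by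
  apply Finset.sum_nonneg
  intro c hc
  exact mul_nonneg (x_pos_of_supp hc).le (zval_nonneg u v w a b c)

section W
variable (hw : IsWeighting P x)
include hw

lemma hval_le_one (u v w a b : ℕ) : hval P x u v w a b ≤ 1 := by
  rw [hval]
  calc ∑ c ∈ supp P x, x c * zval P u v w a b c ≤ ∑ c ∈ supp P x, x c := by
        apply Finset.sum_le_sum
        intro c hc
        exact mul_le_of_le_one_right (x_pos_of_supp hc).le (zval_le_one u v w a b c)
    _ = 1 := sum_supp_eq_one hw

lemma sum_x_mul_D_eq_zero (u v w a b : ℕ) :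
    ∑ c ∈ supp P x, x c * (zval P u v w a b c - hval P x u v w a b) = 0 := by
  have h1 : ∑ c ∈ supp P x, x c * (zval P u v w a b c - hval P x u v w a b)
      = (∑ c ∈ supp P x, x c * zval P u v w a b c)
        - (∑ c ∈ supp P x, x c) * hval P x u v w a b := by
    rw [Finset.sum_mul, ← Finset.sum_sub_distrib]
    congr 1
    ext c
    ring
  rw [h1, sum_supp_eq_one hw, one_mul, hval]
  ring

lemma lamCodeg_le_hval {u v w : ℕ} (huv : u ≠ v) (hvw : v ≠ w) (huw : u ≠ w) (a b : ℕ) :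
    lamCodeg P a b x ≤ hval P x u v w a b := by
  rw [hval]
  rcases lt_trichotomy u v with h | h | h
  · rcases lt_trichotomy v w with h' | h' | h'
    · -- u < v < w : (a,b,c)
      rw [Finset.sum_congr rfl (fun c _ => by rw [zval, trip_1 h h']), sum_ind_1 hw a b,
        lamCodeg]
      exact le_trans (min_le_left _ _) (le_trans (min_le_left _ _) (min_le_left _ _))
    · exact absurd h' hvw
    · rcases lt_trichotomy u w with h'' | h'' | h''
      · -- u < w < v : (c,b,a)
        rw [Finset.sum_congr rfl (fun c _ => by rw [zval, trip_3 h'' h']), sum_ind_3 hw b a,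
          lamCodeg]
        exact le_trans (min_le_right _ _) (min_le_right _ _)
      · exact absurd h'' huw
      · -- w < u < v : (c,a,b)
        rw [Finset.sum_congr rfl (fun c _ => by rw [zval, trip_6 h'' h]), sum_ind_3 hw a b,
          lamCodeg]
        exact le_trans (min_le_right _ _) (min_le_left _ _)
  · exact absurd h huv
  · rcases lt_trichotomy v w with h' | h' | h'
    · rcases lt_trichotomy u w with h'' | h'' | h''
      · -- v < u < w : (a,c,b)
        rw [Finset.sum_congr rfl (fun c _ => by rw [zval, trip_4 h h'']), sum_ind_2 hw a b,
          lamCodeg]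
        exact le_trans (min_le_left _ _) (le_trans (min_le_right _ _) (min_le_left _ _))
      · exact absurd h'' huw
      · -- v < w < u : (b,c,a)
        rw [Finset.sum_congr rfl (fun c _ => by rw [zval, trip_5 h' h'']), sum_ind_2 hw b a,
          lamCodeg]
        exact le_trans (min_le_left _ _) (le_trans (min_le_right _ _) (min_le_right _ _))
    · exact absurd h' hvw
    · -- w < v < u : (b,a,c)
      rw [Finset.sum_congr rfl (fun c _ => by rw [zval, trip_2 h' h]), sum_ind_1 hw b a,
        lamCodeg]
      exact le_trans (min_le_left _ _) (le_trans (min_le_left _ _) (min_le_right _ _))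

lemma Dg_abs_le {m : ℕ} (g : Idx m → ℕ) (u v w : ℕ) : |Dg P x g u v w| ≤ 1 := by
  rw [Dg, abs_le]
  constructor
  · have := zval_nonneg (P := P) u v w (cpair g u v) (cpair g v w) (cpair g u w)
    have := hval_le_one hw u v w (cpair g u v) (cpair g v w)
    linarith
  · have := zval_le_one (P := P) u v w (cpair g u v) (cpair g v w) (cpair g u w)
    have := hval_nonneg (P := P) (x := x) u v w (cpair g u v) (cpair g v w)
    linarith

end W

end
end PLB


namespace PLB
open Finset

noncomputable section

/-- Weight of a colouring. -/
def ww (x : ℕ → ℝ) {m : ℕ} (g : Idx m → ℕ) : ℝ := ∏ i : Idx m, x (g i)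

/-- Expectation over the sample space. -/
def EE (P : Palette) (x : ℕ → ℝ) (m : ℕ) (f : (Idx m → ℕ) → ℝ) : ℝ :=
  ∑ g ∈ Omega P x m, ww x g * f g

/-- Weight with coordinate `i₀` removed. -/
def ww' (x : ℕ → ℝ) {m : ℕ} (i₀ : Idx m) (g : Idx m → ℕ) : ℝ :=
  ∏ i ∈ univ.erase i₀, x (g i)

variable {P : Palette} {x : ℕ → ℝ} {m : ℕ}

lemma ww_nonneg {g : Idx m → ℕ} (hg : g ∈ Omega P x m) : 0 ≤ ww x g :=
  Finset.prod_nonneg fun i _ => (x_pos_of_supp (Fintype.mem_piFinset.mp hg i)).le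

lemma sum_ww (hw : IsWeighting P x) : ∑ g ∈ Omega P x m, ww x g = 1 := by
  unfold ww Omega
  rw [← Finset.prod_univ_sum]
  rw [Finset.prod_congr rfl (fun (i : Idx m) _ => sum_supp_eq_one hw), Finset.prod_const_one]

lemma EE_one (hw : IsWeighting P x) : EE P x m (fun _ => 1) = 1 := by
  rw [EE, Finset.sum_congr rfl (fun g _ => mul_one _)]
  exact sum_ww hw

lemma update_mem_Omega {g : Idx m → ℕ} (hg : g ∈ Omega P x m) (i₀ : Idx m) {c : ℕ}
    (hc : c ∈ supp P x) : Function.update g i₀ c ∈ Omega P x m := by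
  rw [Omega, Fintype.mem_piFinset]
  intro i
  rcases eq_or_ne i i₀ with rfl | hne
  · rw [Function.update_self]; exact hc
  · rw [Function.update_of_ne hne]; exact Fintype.mem_piFinset.mp hg i

lemma ww_eq (i₀ : Idx m) (g : Idx m → ℕ) : ww x g = x (g i₀) * ww' x i₀ g :=
  (Finset.mul_prod_erase univ _ (mem_univ i₀)).symm

lemma ww'_update (i₀ : Idx m) (g : Idx m → ℕ) (c : ℕ) :
    ww' x i₀ (Function.update g i₀ c) = ww' x i₀ g := by
  apply Finset.prod_congr rfl
  intro i hi
  rw [Function.update_of_ne (mem_erase.mp hi).1]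

/-- Resampling a coordinate. -/
lemma EE_resample (hw : IsWeighting P x) (i₀ : Idx m) (f : (Idx m → ℕ) → ℝ) :
    EE P x m f = ∑ c ∈ supp P x, x c * EE P x m (fun g => f (Function.update g i₀ c)) := by
  have maps : ∀ g ∈ Omega P x m, g i₀ ∈ supp P x := fun g hg => Fintype.mem_piFinset.mp hg i₀
  have claim2 : ∀ F : (Idx m → ℕ) → ℝ, ∑ g ∈ Omega P x m, ww x g * F g
      = ∑ c ∈ supp P x, x c * ∑ h ∈ (Omega P x m).filter (fun h => h i₀ = c),
          ww' x i₀ h * F h := by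
    intro F
    rw [← Finset.sum_fiberwise_of_maps_to maps (fun g => ww x g * F g)]
    apply Finset.sum_congr rfl
    intro c _
    rw [Finset.mul_sum]
    apply Finset.sum_congr rfl
    intro g hg
    rw [mem_filter] at hg
    rw [ww_eq i₀ g, hg.2]
    ring
  have claim1 : ∀ c ∈ supp P x, ∑ g ∈ Omega P x m, ww x g * f (Function.update g i₀ c)
      = ∑ h ∈ (Omega P x m).filter (fun h => h i₀ = c), ww' x i₀ h * f h := by
    intro c hc
    rw [claim2 (fun g => f (Function.update g i₀ c))]
    have bij : ∀ c' ∈ supp P x,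
        ∑ g ∈ (Omega P x m).filter (fun h => h i₀ = c'),
          ww' x i₀ g * f (Function.update g i₀ c)
        = ∑ h ∈ (Omega P x m).filter (fun h => h i₀ = c), ww' x i₀ h * f h := by
      intro c' hc'
      apply Finset.sum_nbij' (fun g => Function.update g i₀ c) (fun h => Function.update h i₀ c')
      · intro g hg
        rw [mem_filter] at hg ⊢
        exact ⟨update_mem_Omega hg.1 i₀ hc, Function.update_self _ _ _⟩
      · intro h hh
        rw [mem_filter] at hh ⊢
        exact ⟨update_mem_Omega hh.1 i₀ hc', Function.update_self _ _ _⟩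
      · intro g hg
        rw [mem_filter] at hg
        rw [Function.update_idem, ← hg.2, Function.update_eq_self]
      · intro h hh
        rw [mem_filter] at hh
        rw [Function.update_idem, ← hh.2, Function.update_eq_self]
      · intro g hg
        rw [ww'_update]
    rw [Finset.sum_congr rfl (fun c' hc' => by rw [bij c' hc'])]
    rw [← Finset.sum_mul, sum_supp_eq_one hw, one_mul]
  rw [EE, claim2 f]
  apply Finset.sum_congr rfl
  intro c hc
  rw [EE, claim1 c hc]

end
end PLB


namespace PLB
open Finset

noncomputable section

variable {P : Palette} {x : ℕ → ℝ} {m : ℕ}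

lemma EE_const_mul (c : ℝ) (f : (Idx m → ℕ) → ℝ) :
    EE P x m (fun g => c * f g) = c * EE P x m f := by
  rw [EE, EE, Finset.mul_sum]
  apply Finset.sum_congr rfl
  intro g _
  ring

lemma EE_congr {f f' : (Idx m → ℕ) → ℝ} (h : ∀ g, f g = f' g) :
    EE P x m f = EE P x m f' := by
  rw [EE, EE]
  exact Finset.sum_congr rfl (fun g _ => by rw [h g])

/-- Markov-type bound: the weight of a set where `exp (f g) ≥ 1` is at most the
expectation of `exp ∘ f`. -/
lemma prob_le (A : Finset (Idx m → ℕ)) (hA : A ⊆ Omega P x m) (f : (Idx m → ℕ) → ℝ)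
    (h1 : ∀ g ∈ A, 1 ≤ Real.exp (f g)) :
    ∑ g ∈ A, ww x g ≤ EE P x m (fun g => Real.exp (f g)) := by
  calc ∑ g ∈ A, ww x g ≤ ∑ g ∈ A, ww x g * Real.exp (f g) := by
        apply Finset.sum_le_sum
        intro g hg
        exact le_mul_of_one_le_right (ww_nonneg (hA hg)) (h1 g hg)
    _ ≤ ∑ g ∈ Omega P x m, ww x g * Real.exp (f g) := by
        apply Finset.sum_le_sum_of_subset_of_nonneg hA
        intro g hg _
        exact mul_nonneg (ww_nonneg hg) (Real.exp_pos _).le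
    _ = EE P x m (fun g => Real.exp (f g)) := rfl

/-- The peeling lemma: expectation of a product of nonnegative single-coordinate
functions is bounded by the product of their conditional bounds. -/
lemma peel {α : Type} [DecidableEq α] (hw : IsWeighting P x) (B : ℝ) (hB : 1 ≤ B)
    (F : α → (Idx m → ℕ) → ℝ) (co : α → Idx m) :
    ∀ s : Finset α,
      (∀ a ∈ s, ∀ g, 0 ≤ F a g) →
      (∀ a ∈ s, ∀ a' ∈ s, a ≠ a' → ∀ g c, F a (Function.update g (co a') c) = F a g) →
      (∀ a ∈ s, ∀ g ∈ Omega P x m,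
        ∑ c ∈ supp P x, x c * F a (Function.update g (co a) c) ≤ B) →
      EE P x m (fun g => ∏ a ∈ s, F a g) ≤ B ^ s.card := by
  intro s
  induction s using Finset.induction_on with
  | empty =>
    intro _ _ _
    simp only [Finset.prod_empty, Finset.card_empty, pow_zero]
    exact le_of_eq (EE_one hw)
  | @insert a₀ s' ha ih =>
    intro hpos hdep hcond
    have hmem : ∀ a ∈ s', a ∈ insert a₀ s' := fun a ha' => mem_insert_of_mem ha'
    have ihs := ih (fun a ha' g => hpos a (hmem a ha') g)
      (fun a ha' a' ha'' hne g c => hdep a (hmem a ha') a' (hmem a' ha'') hne g c)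
      (fun a ha' g hg => hcond a (hmem a ha') g hg)
    rw [Finset.card_insert_of_notMem ha]
    have e1 : EE P x m (fun g => ∏ a ∈ insert a₀ s', F a g)
        = EE P x m (fun g => F a₀ g * ∏ a ∈ s', F a g) :=
      EE_congr (fun g => by rw [Finset.prod_insert ha])
    rw [e1, EE_resample hw (co a₀)]
    have e2 : ∀ c, EE P x m (fun g => F a₀ (Function.update g (co a₀) c)
          * ∏ a ∈ s', F a (Function.update g (co a₀) c))
        = EE P x m (fun g => F a₀ (Function.update g (co a₀) c) * ∏ a ∈ s', F a g) := by
      intro c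
      apply EE_congr
      intro g
      congr 1
      apply Finset.prod_congr rfl
      intro a ha'
      exact hdep a (hmem a ha') a₀ (mem_insert_self _ _)
        (fun hEq => ha (hEq ▸ ha')) g c
    calc ∑ c ∈ supp P x, x c * EE P x m
            (fun g => (fun g' => F a₀ g' * ∏ a ∈ s', F a g') (Function.update g (co a₀) c))
        = ∑ g ∈ Omega P x m, ww x g * ((∏ a ∈ s', F a g)
            * ∑ c ∈ supp P x, x c * F a₀ (Function.update g (co a₀) c)) := by
          rw [Finset.sum_congr rfl (fun c _ => by rw [e2 c, EE, Finset.mul_sum])]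
          rw [Finset.sum_comm]
          apply Finset.sum_congr rfl
          intro g _
          rw [Finset.mul_sum, Finset.mul_sum]
          apply Finset.sum_congr rfl
          intro c _
          ring
      _ ≤ ∑ g ∈ Omega P x m, ww x g * ((∏ a ∈ s', F a g) * B) := by
          apply Finset.sum_le_sum
          intro g hg
          apply mul_le_mul_of_nonneg_left ?_ (ww_nonneg hg)
          exact mul_le_mul_of_nonneg_left (hcond a₀ (mem_insert_self _ _) g hg)
            (Finset.prod_nonneg fun a ha' => hpos a (hmem a ha') g)
      _ = B * EE P x m (fun g => ∏ a ∈ s', F a g) := by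
          rw [EE, Finset.mul_sum]
          apply Finset.sum_congr rfl
          intro g _
          ring
      _ ≤ B * B ^ s'.card := mul_le_mul_of_nonneg_left ihs (le_trans zero_le_one hB)
      _ = B ^ (s'.card + 1) := by rw [pow_succ]; ring

end
end PLB


namespace PLB
open Finset

noncomputable section

/-- Ordered top pairs for middle vertex `v`. -/
def topsO (m v : ℕ) : Finset (ℕ × ℕ) :=
  ((range m) ×ˢ (range m)).filter (fun q => q.1 < q.2 ∧ q.1 ≠ v ∧ q.2 ≠ v)

/-- Contribution of a top pair to the cut sum. -/
def xi (P : Palette) (x : ℕ → ℝ) {m : ℕ} (v : ℕ) (S T : Finset ℕ) (q : ℕ × ℕ)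
    (g : Idx m → ℕ) : ℝ :=
  (if q.1 ∈ S ∧ q.2 ∈ T then Dg P x g q.1 v q.2 else 0) +
  (if q.2 ∈ S ∧ q.1 ∈ T then Dg P x g q.2 v q.1 else 0)

/-- The cut sum for middle vertex `v` and vertex sets `S`, `T`. -/
def FF (P : Palette) (x : ℕ → ℝ) {m : ℕ} (g : Idx m → ℕ) (v : ℕ) (S T : Finset ℕ) : ℝ :=
  ∑ q ∈ topsO m v, xi P x v S T q g

/-- Coordinate of an ordered pair. -/
def co {m : ℕ} (idef : Idx m) (q : ℕ × ℕ) : Idx m :=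
  if h : ({q.1, q.2} : Finset ℕ) ∈ pairsm m then ⟨{q.1, q.2}, h⟩ else idef

variable {P : Palette} {x : ℕ → ℝ} {m : ℕ}

lemma mem_topsO {q : ℕ × ℕ} {v : ℕ} (hq : q ∈ topsO m v) :
    q.1 < m ∧ q.2 < m ∧ q.1 < q.2 ∧ q.1 ≠ v ∧ q.2 ≠ v := by
  rw [topsO, mem_filter, mem_product, mem_range, mem_range] at hq
  exact ⟨hq.1.1, hq.1.2, hq.2.1, hq.2.2.1, hq.2.2.2⟩

lemma co_topsO (idef : Idx m) {q : ℕ × ℕ} {v : ℕ} (hq : q ∈ topsO m v) :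
    (co idef q).1 = ({q.1, q.2} : Finset ℕ) := by
  obtain ⟨h1, h2, h3, _, _⟩ := mem_topsO hq
  rw [co, dif_pos (pair_mem_pairsm (by omega) h1 h2)]

lemma pair_eq_pair {a b c d : ℕ} (hab : a < b) (hcd : c < d)
    (h : ({a,b} : Finset ℕ) = {c,d}) : a = c ∧ b = d := by
  have key : ∀ t : ℕ, (t = a ∨ t = b) ↔ (t = c ∨ t = d) := by
    intro t
    have := Finset.ext_iff.mp h t
    simpa using this
  have ka := (key a).mp (Or.inl rfl)
  have kb := (key b).mp (Or.inr rfl)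
  have kc := (key c).mpr (Or.inl rfl)
  have kd := (key d).mpr (Or.inr rfl)
  omega

lemma cpair_update_ne {g : Idx m → ℕ} {i₀ : Idx m} {u v : ℕ}
    (h : ({u,v} : Finset ℕ) ≠ i₀.1) (c : ℕ) :
    cpair (Function.update g i₀ c) u v = cpair g u v := by
  unfold cpair phig
  by_cases hp : ({u,v} : Finset ℕ) ∈ pairsm m
  · rw [dif_pos hp, dif_pos hp]
    exact Function.update_of_ne (fun hEq => h (congrArg Subtype.val hEq)) _ _
  · rw [dif_neg hp, dif_neg hp]

lemma cpair_update_eq {g : Idx m → ℕ} {u v : ℕ} (hp : ({u,v} : Finset ℕ) ∈ pairsm m) (c : ℕ) :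
    cpair (Function.update g ⟨{u,v}, hp⟩ c) u v = c := by
  unfold cpair phig
  rw [dif_pos hp]
  exact Function.update_self _ _ _

/-- A pair containing `v` differs from a top pair for `v`. -/
lemma leg_ne_top {u v a b : ℕ} (ha : a ≠ v) (hb : b ≠ v) :
    ({u, v} : Finset ℕ) ≠ ({a, b} : Finset ℕ) := by
  intro h
  have : v ∈ ({a, b} : Finset ℕ) := h ▸ (by simp)
  rw [mem_insert, mem_singleton] at this
  rcases this with h' | h' <;> omega

/-- `Dg` is unchanged by updating a coordinate different from its three pairs. -/
lemma Dg_update_ne {g : Idx m → ℕ} {i₀ : Idx m} {u v w : ℕ}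
    (h1 : ({u,v} : Finset ℕ) ≠ i₀.1) (h2 : ({v,w} : Finset ℕ) ≠ i₀.1)
    (h3 : ({u,w} : Finset ℕ) ≠ i₀.1) (c : ℕ) :
    Dg P x (Function.update g i₀ c) u v w = Dg P x g u v w := by
  rw [Dg, Dg, cpair_update_ne h1, cpair_update_ne h2, cpair_update_ne h3]

lemma xi_update_ne {g : Idx m → ℕ} {v : ℕ} {S T : Finset ℕ} {q q' : ℕ × ℕ}
    (hq : q ∈ topsO m v) (hq' : q' ∈ topsO m v) (hne : q ≠ q') (idef : Idx m) (c : ℕ) :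
    xi P x v S T q (Function.update g (co idef q') c) = xi P x v S T q g := by
  obtain ⟨l1, l2, l3, l4, l5⟩ := mem_topsO hq
  obtain ⟨r1, r2, r3, r4, r5⟩ := mem_topsO hq'
  have hco := co_topsO idef hq'
  have htop : ({q.1, q.2} : Finset ℕ) ≠ (co idef q').1 := by
    rw [hco]
    intro h
    obtain ⟨h1, h2⟩ := pair_eq_pair l3 r3 h
    exact hne (Prod.ext h1 h2)
  have hleg1 : ∀ u : ℕ, ({u, v} : Finset ℕ) ≠ (co idef q').1 := by
    intro u
    rw [hco]
    exact leg_ne_top r4 r5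
  have e1 : Dg P x (Function.update g (co idef q') c) q.1 v q.2 = Dg P x g q.1 v q.2 :=
    Dg_update_ne (hleg1 q.1) (by rw [pair_comm v q.2]; exact hleg1 q.2) htop c
  have e2 : Dg P x (Function.update g (co idef q') c) q.2 v q.1 = Dg P x g q.2 v q.1 :=
    Dg_update_ne (hleg1 q.2) (by rw [pair_comm v q.1]; exact hleg1 q.1)
      (by rw [pair_comm q.2 q.1]; exact htop) c
  rw [xi, xi, e1, e2]

end
end PLB


namespace PLB
open Finset

noncomputable section

variable {P : Palette} {x : ℕ → ℝ} {m : ℕ}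

lemma cond_bound (hw : IsWeighting P x) {t : ℝ} (ht0 : 0 ≤ t) (ht4 : t ≤ 1/4)
    (v : ℕ) (S T : Finset ℕ) {q : ℕ × ℕ} (hq : q ∈ topsO m v) (idef : Idx m)
    (g : Idx m → ℕ) :
    ∑ c ∈ supp P x, x c * Real.exp (-t * xi P x v S T q (Function.update g (co idef q) c))
      ≤ 1 + 8 * t^2 := by
  obtain ⟨h1, h2, h3, h4, h5⟩ := mem_topsO hq
  have hp : ({q.1, q.2} : Finset ℕ) ∈ pairsm m := pair_mem_pairsm (by omega) h1 h2
  have hcoeq : co idef q = ⟨{q.1, q.2}, hp⟩ := Subtype.ext (co_topsO idef hq)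
  have hlegne : ∀ u : ℕ, ({u, v} : Finset ℕ) ≠ (co idef q).1 := by
    intro u
    rw [co_topsO idef hq]
    exact leg_ne_top h4 h5
  set ζ : ℕ → ℝ := fun c =>
    (if q.1 ∈ S ∧ q.2 ∈ T then
      zval P q.1 v q.2 (cpair g q.1 v) (cpair g v q.2) c
        - hval P x q.1 v q.2 (cpair g q.1 v) (cpair g v q.2) else 0)
    + (if q.2 ∈ S ∧ q.1 ∈ T then
      zval P q.2 v q.1 (cpair g q.2 v) (cpair g v q.1) c
        - hval P x q.2 v q.1 (cpair g q.2 v) (cpair g v q.1) else 0) with hζ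
  have htopc : ∀ c, cpair (Function.update g (co idef q) c) q.1 q.2 = c := by
    intro c
    rw [hcoeq]
    exact cpair_update_eq hp c
  have htopc' : ∀ c, cpair (Function.update g (co idef q) c) q.2 q.1 = c := by
    intro c
    rw [cpair_comm, htopc]
  have key : ∀ c, xi P x v S T q (Function.update g (co idef q) c) = ζ c := by
    intro c
    have eD1 : Dg P x (Function.update g (co idef q) c) q.1 v q.2
        = zval P q.1 v q.2 (cpair g q.1 v) (cpair g v q.2) c
          - hval P x q.1 v q.2 (cpair g q.1 v) (cpair g v q.2) := by
      rw [Dg, cpair_update_ne (hlegne q.1),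
        cpair_update_ne (by rw [pair_comm v q.2]; exact hlegne q.2), htopc c]
    have eD2 : Dg P x (Function.update g (co idef q) c) q.2 v q.1
        = zval P q.2 v q.1 (cpair g q.2 v) (cpair g v q.1) c
          - hval P x q.2 v q.1 (cpair g q.2 v) (cpair g v q.1) := by
      rw [Dg, cpair_update_ne (hlegne q.2),
        cpair_update_ne (by rw [pair_comm v q.1]; exact hlegne q.1), htopc' c]
    rw [xi, eD1, eD2]
  have hmean : ∑ c ∈ supp P x, x c * ζ c = 0 := by
    rw [hζ]
    have : ∀ c, x c * ((if q.1 ∈ S ∧ q.2 ∈ T then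
        zval P q.1 v q.2 (cpair g q.1 v) (cpair g v q.2) c
          - hval P x q.1 v q.2 (cpair g q.1 v) (cpair g v q.2) else 0)
      + (if q.2 ∈ S ∧ q.1 ∈ T then
        zval P q.2 v q.1 (cpair g q.2 v) (cpair g v q.1) c
          - hval P x q.2 v q.1 (cpair g q.2 v) (cpair g v q.1) else 0))
      = x c * (if q.1 ∈ S ∧ q.2 ∈ T then
        zval P q.1 v q.2 (cpair g q.1 v) (cpair g v q.2) c
          - hval P x q.1 v q.2 (cpair g q.1 v) (cpair g v q.2) else 0)
      + x c * (if q.2 ∈ S ∧ q.1 ∈ T then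
        zval P q.2 v q.1 (cpair g q.2 v) (cpair g v q.1) c
          - hval P x q.2 v q.1 (cpair g q.2 v) (cpair g v q.1) else 0) := fun c => mul_add _ _ _
    rw [Finset.sum_congr rfl (fun c _ => this c), Finset.sum_add_distrib]
    have z1 : ∀ (u w : ℕ) (pr : Prop) [Decidable pr],
        ∑ c ∈ supp P x, x c * (if pr then
          zval P u v w (cpair g u v) (cpair g v w) c
            - hval P x u v w (cpair g u v) (cpair g v w) else 0) = 0 := by
      intro u w pr _
      by_cases hpr : pr
      · simp only [if_pos hpr]
        exact sum_x_mul_D_eq_zero hw u v w _ _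
      · simp only [if_neg hpr, mul_zero, Finset.sum_const_zero]
    rw [z1 q.1 q.2 _, z1 q.2 q.1 _, add_zero]
  have habs : ∀ c, |ζ c| ≤ 2 := by
    intro c
    have bnd : ∀ (u w : ℕ) (pr : Prop) [Decidable pr],
        |(if pr then zval P u v w (cpair g u v) (cpair g v w) c
          - hval P x u v w (cpair g u v) (cpair g v w) else 0)| ≤ 1 := by
      intro u w pr _
      by_cases hpr : pr
      · rw [if_pos hpr]
        have b1 := zval_nonneg (P := P) u v w (cpair g u v) (cpair g v w) c
        have b2 := zval_le_one (P := P) u v w (cpair g u v) (cpair g v w) c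
        have b3 := hval_nonneg (P := P) (x := x) u v w (cpair g u v) (cpair g v w)
        have b4 := hval_le_one hw u v w (cpair g u v) (cpair g v w)
        rw [abs_le]
        constructor <;> linarith
      · rw [if_neg hpr]
        norm_num
    calc |ζ c| ≤ _ + _ := abs_add_le _ _
      _ ≤ 1 + 1 := add_le_add (bnd q.1 q.2 _) (bnd q.2 q.1 _)
      _ = 2 := by norm_num
  calc ∑ c ∈ supp P x, x c * Real.exp (-t * xi P x v S T q (Function.update g (co idef q) c))
      = ∑ c ∈ supp P x, x c * Real.exp (-t * ζ c) :=
        Finset.sum_congr rfl (fun c _ => by rw [key c])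
    _ ≤ ∑ c ∈ supp P x, x c * (1 + (-t * ζ c) + 2*(-t * ζ c)^2) := by
        apply Finset.sum_le_sum
        intro c hc
        apply mul_le_mul_of_nonneg_left ?_ (x_pos_of_supp hc).le
        apply exp_le_quad
        rw [abs_mul, abs_neg, abs_of_nonneg ht0]
        calc t * |ζ c| ≤ (1/4) * 2 := by
              apply mul_le_mul ht4 (habs c) (abs_nonneg _) (by norm_num)
          _ = 1/2 := by norm_num
    _ = 1 + (-t) * (∑ c ∈ supp P x, x c * ζ c)
          + 2*t^2 * (∑ c ∈ supp P x, x c * (ζ c)^2) := by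
        rw [Finset.sum_congr rfl (fun c _ => show
          x c * (1 + (-t * ζ c) + 2*(-t * ζ c)^2)
            = x c + (-t) * (x c * ζ c) + 2*t^2 * (x c * (ζ c)^2) from by ring)]
        rw [Finset.sum_add_distrib, Finset.sum_add_distrib, ← Finset.mul_sum, ← Finset.mul_sum,
          sum_supp_eq_one hw]
    _ ≤ 1 + 8 * t^2 := by
        rw [hmean, mul_zero, add_zero]
        have hsq : ∑ c ∈ supp P x, x c * (ζ c)^2 ≤ 4 := by
          calc ∑ c ∈ supp P x, x c * (ζ c)^2 ≤ ∑ c ∈ supp P x, x c * 4 := by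
                apply Finset.sum_le_sum
                intro c hc
                apply mul_le_mul_of_nonneg_left ?_ (x_pos_of_supp hc).le
                have := habs c
                have h2 : (ζ c)^2 = |ζ c|^2 := (sq_abs _).symm
                rw [h2]
                nlinarith [abs_nonneg (ζ c)]
            _ = 4 := by rw [← Finset.sum_mul, sum_supp_eq_one hw, one_mul]
        nlinarith [sq_nonneg t]

end
end PLB


namespace PLB
open Finset

noncomputable section

variable {P : Palette} {x : ℕ → ℝ} {m : ℕ}

lemma bad_prob (hw : IsWeighting P x) (hm2 : 2 ≤ m) {ε : ℝ} (hε : 0 < ε) (hε1 : ε ≤ 1)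
    (v : ℕ) (S T : Finset ℕ) :
    ∑ g ∈ (Omega P x m).filter (fun g => FF P x g v S T < -(ε * m^2)), ww x g
      ≤ Real.exp (-(ε^2 * m^2)/32) := by
  set t : ℝ := ε/16 with ht
  have ht0 : 0 < t := by rw [ht]; positivity
  have ht4 : t ≤ 1/4 := by rw [ht]; linarith
  have idef : Idx m := ⟨{0,1}, pair_mem_pairsm (by norm_num) (by omega) (by omega)⟩
  have hB : (1:ℝ) ≤ 1 + 8 * t^2 := by nlinarith [sq_nonneg t]
  have hpeel := peel (m := m) hw (1 + 8*t^2) hB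
    (fun q g => Real.exp (-t * xi P x v S T q g)) (co idef) (topsO m v)
    (fun q _ g => (Real.exp_pos _).le)
    (fun q hq q' hq' hne g c => by rw [xi_update_ne hq hq' hne idef c])
    (fun q hq g hg => cond_bound hw ht0.le ht4 v S T hq idef g)
  have hprod : ∀ g : Idx m → ℕ, Real.exp (-t * FF P x g v S T)
      = ∏ q ∈ topsO m v, Real.exp (-t * xi P x v S T q g) := by
    intro g
    rw [FF, Finset.mul_sum, Real.exp_sum]
  have hcard : ((topsO m v).card : ℝ) ≤ (m:ℝ)^2 := by
    have h1 : (topsO m v).card ≤ (range m ×ˢ range m).card := Finset.card_filter_le _ _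
    rw [Finset.card_product, Finset.card_range] at h1
    calc ((topsO m v).card : ℝ) ≤ ((m * m : ℕ) : ℝ) := by exact_mod_cast h1
      _ = (m:ℝ)^2 := by push_cast; ring
  have hEE : EE P x m (fun g => Real.exp (-t * FF P x g v S T))
      ≤ Real.exp (8 * t^2 * m^2) := by
    calc EE P x m (fun g => Real.exp (-t * FF P x g v S T))
        = EE P x m (fun g => ∏ q ∈ topsO m v, Real.exp (-t * xi P x v S T q g)) :=
          EE_congr hprod
      _ ≤ (1 + 8*t^2) ^ (topsO m v).card := hpeel
      _ ≤ (Real.exp (8*t^2)) ^ (topsO m v).card := by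
          apply pow_le_pow_left₀ (by nlinarith [sq_nonneg t])
          have := Real.add_one_le_exp (8*t^2)
          linarith
      _ = Real.exp ((topsO m v).card * (8*t^2)) := by
          rw [Real.exp_nat_mul]
      _ ≤ Real.exp (8 * t^2 * m^2) := by
          apply Real.exp_le_exp.mpr
          have h8 : (0:ℝ) ≤ 8 * t^2 := by positivity
          calc ((topsO m v).card : ℝ) * (8*t^2) ≤ (m:ℝ)^2 * (8*t^2) :=
                mul_le_mul_of_nonneg_right hcard h8
            _ = 8 * t^2 * m^2 := by ring
  have step1 : ∑ g ∈ (Omega P x m).filter (fun g => FF P x g v S T < -(ε * m^2)), ww x g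
      ≤ EE P x m (fun g => Real.exp (-t * FF P x g v S T - t * (ε * m^2))) := by
    apply prob_le _ (filter_subset _ _)
    intro g hg
    rw [mem_filter] at hg
    have h2 : t * (ε * m^2) ≤ -t * FF P x g v S T := by
      have := hg.2
      nlinarith
    rw [show (1:ℝ) = Real.exp 0 from (Real.exp_zero).symm]
    apply Real.exp_le_exp.mpr
    linarith
  refine le_trans step1 ?_
  have e3 : EE P x m (fun g => Real.exp (-t * FF P x g v S T - t * (ε * m^2)))
      = Real.exp (-(t * (ε * m^2))) * EE P x m (fun g => Real.exp (-t * FF P x g v S T)) := by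
    rw [← EE_const_mul]
    apply EE_congr
    intro g
    rw [← Real.exp_add]
    ring_nf
  rw [e3]
  calc Real.exp (-(t * (ε * m^2))) * EE P x m (fun g => Real.exp (-t * FF P x g v S T))
      ≤ Real.exp (-(t * (ε * m^2))) * Real.exp (8 * t^2 * m^2) :=
        mul_le_mul_of_nonneg_left hEE (Real.exp_pos _).le
    _ = Real.exp (8 * t^2 * m^2 - t * (ε * m^2)) := by
        rw [← Real.exp_add]; ring_nf
    _ = Real.exp (-(ε^2 * m^2)/32) := by
        congr 1
        rw [ht]
        ring

end
end PLB


namespace PLB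
open Finset

noncomputable section

variable {P : Palette} {x : ℕ → ℝ} {m : ℕ}

lemma exists_good (hw : IsWeighting P x) (hm2 : 2 ≤ m) {ε : ℝ} (hε : 0 < ε) (hε1 : ε ≤ 1)
    (hsmall : (m:ℝ) * (2^m * 2^m) * Real.exp (-(ε^2 * m^2)/32) < 1) :
    ∃ g ∈ Omega P x m, ∀ v ∈ range m, ∀ S ∈ (range m).powerset, ∀ T ∈ (range m).powerset,
      -(ε * m^2) ≤ FF P x g v S T := by
  classical
  by_contra hcon
  push_neg at hcon
  have hex : ∀ g ∈ Omega P x m, ∃ i : ℕ × Finset ℕ × Finset ℕ,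
      i ∈ (range m) ×ˢ ((range m).powerset ×ˢ (range m).powerset) ∧
      g ∈ (Omega P x m).filter (fun g' => FF P x g' i.1 i.2.1 i.2.2 < -(ε * m^2)) := by
    intro g hg
    obtain ⟨v, hv, S, hS, T, hT, hlt⟩ := hcon g hg
    exact ⟨(v, S, T), mem_product.mpr ⟨hv, mem_product.mpr ⟨hS, hT⟩⟩,
      mem_filter.mpr ⟨hg, hlt⟩⟩
  obtain ⟨wit, hwit⟩ : ∃ wit : (Idx m → ℕ) → ℕ × Finset ℕ × Finset ℕ,
      ∀ g ∈ Omega P x m,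
        wit g ∈ (range m) ×ˢ ((range m).powerset ×ˢ (range m).powerset) ∧
        g ∈ (Omega P x m).filter
          (fun g' => FF P x g' (wit g).1 (wit g).2.1 (wit g).2.2 < -(ε * m^2)) :=
    ⟨fun g => if h : ∃ i : ℕ × Finset ℕ × Finset ℕ,
        i ∈ (range m) ×ˢ ((range m).powerset ×ˢ (range m).powerset) ∧
        g ∈ (Omega P x m).filter (fun g' => FF P x g' i.1 i.2.1 i.2.2 < -(ε * m^2))
      then h.choose else (0, ∅, ∅),
      fun g hg => by beta_reduce; split_ifs with hh <;> [exact hh.choose_spec; exact absurd (hex g hg) hh]⟩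
  have h2 : ∑ g ∈ Omega P x m, ww x g
      = ∑ i ∈ (range m) ×ˢ ((range m).powerset ×ˢ (range m).powerset),
          ∑ g ∈ (Omega P x m).filter (fun g => wit g = i), ww x g :=
    (Finset.sum_fiberwise_of_maps_to (fun g hg => (hwit g hg).1) _).symm
  have h3 : ∀ i ∈ (range m) ×ˢ ((range m).powerset ×ˢ (range m).powerset),
      ∑ g ∈ (Omega P x m).filter (fun g => wit g = i), ww x g
        ≤ Real.exp (-(ε^2 * m^2)/32) := by
    intro i hi
    refine le_trans (Finset.sum_le_sum_of_subset_of_nonneg ?_ ?_)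
      (bad_prob hw hm2 hε hε1 i.1 i.2.1 i.2.2)
    · intro g hg
      rw [mem_filter] at hg
      have hB := (hwit g hg.1).2
      rw [hg.2] at hB
      exact hB
    · intro g hg _
      exact ww_nonneg (mem_filter.mp hg).1
  have h4 : ∑ i ∈ (range m) ×ˢ ((range m).powerset ×ˢ (range m).powerset),
      ∑ g ∈ (Omega P x m).filter (fun g => wit g = i), ww x g
      ≤ ((range m) ×ˢ ((range m).powerset ×ˢ (range m).powerset)).card
          • Real.exp (-(ε^2 * m^2)/32) :=
    Finset.sum_le_card_nsmul _ _ _ h3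
  have hcard : (((range m) ×ˢ ((range m).powerset ×ˢ (range m).powerset)).card : ℝ)
      = (m:ℝ) * (2^m * 2^m) := by
    rw [Finset.card_product, Finset.card_product, Finset.card_powerset, Finset.card_range]
    push_cast
    ring
  have hone : (1:ℝ) ≤ (m:ℝ) * (2^m * 2^m) * Real.exp (-(ε^2 * m^2)/32) := by
    calc (1:ℝ) = ∑ g ∈ Omega P x m, ww x g := (sum_ww hw).symm
      _ = _ := h2
      _ ≤ ((range m) ×ˢ ((range m).powerset ×ˢ (range m).powerset)).card
            • Real.exp (-(ε^2 * m^2)/32) := h4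
      _ = (m:ℝ) * (2^m * 2^m) * Real.exp (-(ε^2 * m^2)/32) := by
          rw [nsmul_eq_mul, hcard]
  linarith

end
end PLB


namespace PLB
open Finset

noncomputable section
attribute [local instance] Classical.propDecidable

lemma satisfies_of_sub {P : Palette} {F H : ThreeGraph} (hsub : IsSubhypergraph F H)
    (hH : Satisfies H P) : Satisfies F P := by
  obtain ⟨f, hinj, hmap, hedge⟩ := hsub
  obtain ⟨ord, φ, hordinj, hφ, hP⟩ := hH
  refine ⟨ord ∘ f, fun e => φ (e.image f), ?_, ?_, ?_⟩
  · exact Set.InjOn.comp hordinj hinj (fun v hv => hmap v hv)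
  · intro u hu v hv huv
    have himg : ({u, v} : Finset ℕ).image f = {f u, f v} := by
      rw [Finset.image_insert, Finset.image_singleton]
    show φ (({u, v} : Finset ℕ).image f) ∈ palColours P
    rw [himg]
    exact hφ (f u) (hmap u hu) (f v) (hmap v hv) (fun hEq => huv (hinj hu hv hEq))
  · intro u v w he h1 h2
    have himg : ({u, v, w} : Finset ℕ).image f = {f u, f v, f w} := by
      rw [Finset.image_insert, Finset.image_insert, Finset.image_singleton]
    have hed : ({f u, f v, f w} : Finset ℕ) ∈ H.edges := himg ▸ hedge _ he
    have h3 := hP (f u) (f v) (f w) hed h1 h2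
    have e1 : ({u, v} : Finset ℕ).image f = {f u, f v} := by
      rw [Finset.image_insert, Finset.image_singleton]
    have e2 : ({v, w} : Finset ℕ).image f = {f v, f w} := by
      rw [Finset.image_insert, Finset.image_singleton]
    have e3 : ({u, w} : Finset ℕ).image f = {f u, f w} := by
      rw [Finset.image_insert, Finset.image_singleton]
    show (φ (({u, v} : Finset ℕ).image f), φ (({v, w} : Finset ℕ).image f),
      φ (({u, w} : Finset ℕ).image f)) ∈ P
    rw [e1, e2, e3]
    exact h3

lemma HH_satisfies {P : Palette} {x : ℕ → ℝ} {m : ℕ} {g : Idx m → ℕ}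
    (hg : g ∈ Omega P x m) : Satisfies (HH P g) P := by
  refine ⟨id, phig g, fun a _ b _ hab => hab, ?_, ?_⟩
  · intro u hu v hv huv
    have hu' : u < m := mem_range.mp (by exact hu)
    have hv' : v < m := mem_range.mp (by exact hv)
    have : phig g {u, v} ∈ supp P x := cpair_mem_supp hg huv hu' hv'
    exact supp_subset_palColours this
  · intro u v w he h1 h2
    exact (mem_filter.mp he).2 u v w h1 h2 rfl

lemma HH_free {P : Palette} {x : ℕ → ℝ} {m : ℕ} {g : Idx m → ℕ} {𝓕 : Set ThreeGraph}
    (hg : g ∈ Omega P x m) (h : ∀ F ∈ 𝓕, ¬ Satisfies F P) :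
    ∀ F ∈ 𝓕, ¬ IsSubhypergraph F (HH P g) :=
  fun F hF hsub => h F hF (satisfies_of_sub hsub (HH_satisfies hg))

end
end PLB


namespace PLB
open Finset

noncomputable section

variable {P : Palette} {x : ℕ → ℝ} {m : ℕ}

lemma ne_of_pair_card {a b : ℕ} (h : ({a, b} : Finset ℕ).card = 2) : a ≠ b := by
  intro hab
  rw [hab, Finset.pair_eq_singleton, Finset.card_singleton] at h
  omega

lemma mem_topsO_iff {q : ℕ × ℕ} {v : ℕ} :
    q ∈ topsO m v ↔ q.1 < m ∧ q.2 < m ∧ q.1 < q.2 ∧ q.1 ≠ v ∧ q.2 ≠ v := by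
  rw [topsO, mem_filter, mem_product, mem_range, mem_range]
  tauto

lemma mem_KEE_iff {g : Idx m → ℕ} {P' Q' : Finset (Finset ℕ)} {p : ℕ × ℕ × ℕ} :
    p ∈ KEE (HH P g) P' Q' ↔ p.1 ∈ range m ∧ p.2.1 ∈ range m ∧ p.2.2 ∈ range m ∧
      ({p.1, p.2.1} : Finset ℕ) ∈ P' ∧ ({p.2.1, p.2.2} : Finset ℕ) ∈ Q' := by
  rw [KEE, mem_filter, mem_product, mem_product]
  exact ⟨fun ⟨⟨h1, h2, h3⟩, h4, h5⟩ => ⟨h1, h2, h3, h4, h5⟩,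
    fun ⟨h1, h2, h3, h4, h5⟩ => ⟨⟨h1, h2, h3⟩, h4, h5⟩⟩

lemma sum_Dg_eq (g : Idx m → ℕ) (P' Q' : Finset (Finset ℕ))
    (hP' : ∀ p ∈ P', p.card = 2) (hQ' : ∀ p ∈ Q', p.card = 2) :
    ∑ p ∈ (KEE (HH P g) P' Q').filter (fun p => ¬ p.1 = p.2.2), Dg P x g p.1 p.2.1 p.2.2
      = ∑ v ∈ range m, FF P x g v
          ((range m).filter (fun u => ({u, v} : Finset ℕ) ∈ P'))
          ((range m).filter (fun w => ({v, w} : Finset ℕ) ∈ Q')) := by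
  classical
  have hmaps : ∀ p ∈ (KEE (HH P g) P' Q').filter (fun p => ¬ p.1 = p.2.2),
      p.2.1 ∈ range m := by
    intro p hp
    exact (mem_KEE_iff.mp (mem_filter.mp hp).1).2.1
  rw [← Finset.sum_fiberwise_of_maps_to hmaps (fun p => Dg P x g p.1 p.2.1 p.2.2)]
  apply Finset.sum_congr rfl
  intro v hv
  have hvm : v < m := mem_range.mp hv
  set S : Finset ℕ := (range m).filter (fun u => ({u, v} : Finset ℕ) ∈ P') with hS
  set T : Finset ℕ := (range m).filter (fun w => ({v, w} : Finset ℕ) ∈ Q') with hT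
  have hSmem : ∀ u, u ∈ S ↔ u < m ∧ ({u, v} : Finset ℕ) ∈ P' := by
    intro u; rw [hS, mem_filter, mem_range]
  have hTmem : ∀ w, w ∈ T ↔ w < m ∧ ({v, w} : Finset ℕ) ∈ Q' := by
    intro w; rw [hT, mem_filter, mem_range]
  have hSne : ∀ u ∈ S, u ≠ v := by
    intro u hu
    exact ne_of_pair_card (hP' _ ((hSmem u).mp hu).2)
  have hTne : ∀ w ∈ T, w ≠ v := by
    intro w hw
    exact fun hEq => (ne_of_pair_card (hQ' _ ((hTmem w).mp hw).2)) hEq.symm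
  -- Step 1: reindex the fiber to ordered pairs
  have step1 : ∑ p ∈ ((KEE (HH P g) P' Q').filter (fun p => ¬ p.1 = p.2.2)).filter
        (fun p => p.2.1 = v), Dg P x g p.1 p.2.1 p.2.2
      = ∑ q ∈ ((range m) ×ˢ (range m)).filter
          (fun q => q.1 ∈ S ∧ q.2 ∈ T ∧ ¬ q.1 = q.2), Dg P x g q.1 v q.2 := by
    apply Finset.sum_nbij' (fun p => (p.1, p.2.2)) (fun q => (q.1, v, q.2))
    · intro p hp
      rw [mem_filter] at hp
      obtain ⟨hp1, hp2⟩ := hp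
      rw [mem_filter] at hp1
      obtain ⟨hpK, hpne⟩ := hp1
      rw [mem_KEE_iff] at hpK
      obtain ⟨h1, h2, h3, h4, h5⟩ := hpK
      rw [mem_filter, mem_product]
      refine ⟨⟨h1, h3⟩, ?_, ?_, hpne⟩
      · rw [hSmem]
        exact ⟨mem_range.mp h1, hp2 ▸ h4⟩
      · rw [hTmem]
        exact ⟨mem_range.mp h3, hp2 ▸ h5⟩
    · intro q hq
      rw [mem_filter, mem_product] at hq
      obtain ⟨⟨hq1, hq2⟩, hqS, hqT, hqne⟩ := hq
      rw [mem_filter, mem_filter, mem_KEE_iff]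
      exact ⟨⟨⟨hq1, hv, hq2, ((hSmem _).mp hqS).2, ((hTmem _).mp hqT).2⟩, hqne⟩, rfl⟩
    · intro p hp
      rw [mem_filter] at hp
      have h2 : p.2.1 = v := hp.2
      dsimp only
      rw [← h2]
    · intro q hq
      rfl
    · intro p hp
      rw [mem_filter] at hp
      rw [hp.2]
  rw [step1, FF]
  -- Step 2: expand xi
  have step2 : ∑ q ∈ topsO m v, xi P x v S T q g
      = (∑ q ∈ (topsO m v).filter (fun q => q.1 ∈ S ∧ q.2 ∈ T), Dg P x g q.1 v q.2)
      + ∑ q ∈ (topsO m v).filter (fun q => q.2 ∈ S ∧ q.1 ∈ T), Dg P x g q.2 v q.1 := by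
    have e : ∀ q ∈ topsO m v, xi P x v S T q g =
        (if q.1 ∈ S ∧ q.2 ∈ T then Dg P x g q.1 v q.2 else 0)
        + (if q.2 ∈ S ∧ q.1 ∈ T then Dg P x g q.2 v q.1 else 0) := fun q _ => rfl
    calc ∑ q ∈ topsO m v, xi P x v S T q g
        = ∑ q ∈ topsO m v, ((if q.1 ∈ S ∧ q.2 ∈ T then Dg P x g q.1 v q.2 else 0)
          + (if q.2 ∈ S ∧ q.1 ∈ T then Dg P x g q.2 v q.1 else 0)) := Finset.sum_congr rfl e
      _ = (∑ q ∈ topsO m v, if q.1 ∈ S ∧ q.2 ∈ T then Dg P x g q.1 v q.2 else 0)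
          + ∑ q ∈ topsO m v, if q.2 ∈ S ∧ q.1 ∈ T then Dg P x g q.2 v q.1 else 0 :=
            Finset.sum_add_distrib
      _ = _ := by rw [Finset.sum_filter, Finset.sum_filter]
  rw [step2]
  -- Step 3: split the ordered-pair sum
  rw [← Finset.sum_filter_add_sum_filter_not (((range m) ×ˢ (range m)).filter
      (fun q => q.1 ∈ S ∧ q.2 ∈ T ∧ ¬ q.1 = q.2)) (fun q => q.1 < q.2)]
  congr 1
  -- Step 4: the increasing half
  · apply Finset.sum_congr
    · ext q
      simp only [mem_filter, mem_product, mem_topsO_iff, mem_range]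
      constructor
      · rintro ⟨⟨⟨hq1, hq2⟩, hqS, hqT, hqne⟩, hlt⟩
        exact ⟨⟨hq1, hq2, hlt, hSne _ hqS, hTne _ hqT⟩, hqS, hqT⟩
      · rintro ⟨⟨h1, h2, h3, h4, h5⟩, hqS, hqT⟩
        exact ⟨⟨⟨h1, h2⟩, hqS, hqT, by omega⟩, h3⟩
    · intro q _
      rfl
  -- Step 5: the decreasing half, via swapping
  · apply Finset.sum_nbij' (fun q => (q.2, q.1)) (fun q => (q.2, q.1))
    · intro q hq
      simp only [mem_filter, mem_product, mem_range, not_lt] at hq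
      obtain ⟨⟨⟨ha, hb⟩, hqS, hqT, hqne⟩, hlt⟩ := hq
      simp only [mem_filter, mem_topsO_iff]
      exact ⟨⟨hb, ha, by omega, hTne _ hqT, hSne _ hqS⟩, hqS, hqT⟩
    · intro q hq
      simp only [mem_filter, mem_topsO_iff] at hq
      obtain ⟨⟨h1, h2, h3, h4, h5⟩, hqS, hqT⟩ := hq
      simp only [mem_filter, mem_product, mem_range, not_lt]
      exact ⟨⟨⟨h2, h1⟩, hqS, hqT, by omega⟩, by omega⟩
    · intro q _; rfl
    · intro q _; rfl
    · intro q _; rfl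

end
end PLB


namespace PLB
open Finset

noncomputable section

variable {P : Palette} {x : ℕ → ℝ} {m : ℕ}

lemma lamEE_nonneg (hw : IsWeighting P x) : 0 ≤ lamEE P x := by
  apply Real.sInf_nonneg
  rintro l ⟨a, ha, b, hb, hpos, rfl⟩
  exact lamCodeg_nonneg hw a b

lemma HH_dense (hw : IsWeighting P x) {g : Idx m → ℕ} (hg : g ∈ Omega P x m)
    {ε η : ℝ} (hε0 : 0 ≤ ε)
    (hgood : ∀ v ∈ range m, ∀ S ∈ (range m).powerset, ∀ T ∈ (range m).powerset,
      -(ε * m^2) ≤ FF P x g v S T)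
    (harith : (m:ℝ)^2 + ε * (m:ℝ)^3 ≤ η * (m:ℝ)^3) :
    IsDenseEE (HH P g) (lamEE P x) η := by
  intro P' Q' hP' hQ'
  have hvc : (((HH P g).verts.card : ℕ) : ℝ) = (m:ℝ) := by
    rw [show (HH P g).verts = range m from rfl, card_range]
  have hl0 := lamEE_nonneg hw
  have hl1 := lamEE_le_one hw
  set K := KEE (HH P g) P' Q' with hK
  set Kd := K.filter (fun p => ¬ p.1 = p.2.2) with hKd
  have hfacts : ∀ p ∈ Kd, p.1 < m ∧ p.2.1 < m ∧ p.2.2 < m ∧ p.1 ≠ p.2.1 ∧ p.2.1 ≠ p.2.2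
      ∧ p.1 ≠ p.2.2 := by
    intro p hp
    rw [hKd, mem_filter] at hp
    obtain ⟨hpK, hne⟩ := hp
    rw [hK, mem_KEE_iff] at hpK
    obtain ⟨h1, h2, h3, h4, h5⟩ := hpK
    exact ⟨mem_range.mp h1, mem_range.mp h2, mem_range.mp h3,
      ne_of_pair_card (hP' _ h4).2, ne_of_pair_card (hQ' _ h5).2, hne⟩
  -- Step A: eEE dominates the sum of edge indicators over distinct triples
  have stepA : (∑ p ∈ Kd, (if ({p.1, p.2.1, p.2.2} : Finset ℕ) ∈ (HH P g).edges
        then (1:ℝ) else 0)) ≤ (eEE (HH P g) P' Q' : ℝ) := by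
    rw [Finset.sum_boole, eEE]
    have hsub : Kd.filter (fun p => ({p.1, p.2.1, p.2.2} : Finset ℕ) ∈ (HH P g).edges)
        ⊆ K.filter (fun p => ({p.1, p.2.1, p.2.2} : Finset ℕ) ∈ (HH P g).edges) :=
      Finset.filter_subset_filter _ (Finset.filter_subset _ _)
    exact_mod_cast Finset.card_le_card hsub
  -- Step B: pointwise identity
  have stepB : ∀ p ∈ Kd, (if ({p.1, p.2.1, p.2.2} : Finset ℕ) ∈ (HH P g).edges
        then (1:ℝ) else 0)
      = Dg P x g p.1 p.2.1 p.2.2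
        + hval P x p.1 p.2.1 p.2.2 (cpair g p.1 p.2.1) (cpair g p.2.1 p.2.2) := by
    intro p hp
    obtain ⟨h1, h2, h3, h4, h5, h6⟩ := hfacts p hp
    have hiff := edge_iff_zval (P := P) g h4 h5 h6 h1 h2 h3
    rw [if_congr hiff rfl rfl]
    show zval P p.1 p.2.1 p.2.2 (cpair g p.1 p.2.1) (cpair g p.2.1 p.2.2)
      (cpair g p.1 p.2.2) = _
    rw [Dg]
    ring
  -- Step C: the hval part is at least l each
  have stepC : lamEE P x * (Kd.card : ℝ) + (∑ p ∈ Kd, Dg P x g p.1 p.2.1 p.2.2)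
      ≤ ∑ p ∈ Kd, (Dg P x g p.1 p.2.1 p.2.2
        + hval P x p.1 p.2.1 p.2.2 (cpair g p.1 p.2.1) (cpair g p.2.1 p.2.2)) := by
    rw [Finset.sum_add_distrib]
    have : lamEE P x * (Kd.card : ℝ)
        ≤ ∑ p ∈ Kd, hval P x p.1 p.2.1 p.2.2 (cpair g p.1 p.2.1) (cpair g p.2.1 p.2.2) := by
      calc lamEE P x * (Kd.card : ℝ) = ∑ _p ∈ Kd, lamEE P x := by
            rw [Finset.sum_const, nsmul_eq_mul]; ring
        _ ≤ _ := by
            apply Finset.sum_le_sum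
            intro p hp
            obtain ⟨h1, h2, h3, h4, h5, h6⟩ := hfacts p hp
            have ha : cpair g p.1 p.2.1 ∈ supp P x := cpair_mem_supp hg h4 h1 h2
            have hb : cpair g p.2.1 p.2.2 ∈ supp P x := cpair_mem_supp hg h5 h2 h3
            refine le_trans (lamEE_le_lamCodeg hw (supp_subset_palColours ha)
              (supp_subset_palColours hb)
              (mul_pos (x_pos_of_supp ha) (x_pos_of_supp hb))) ?_
            exact lamCodeg_le_hval hw h4 h5 h6 _ _
    linarith
  -- Step D: the Dg part is at least -(ε m³)
  have stepD : -(ε * (m:ℝ)^3) ≤ ∑ p ∈ Kd, Dg P x g p.1 p.2.1 p.2.2 := by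
    rw [hKd, hK, sum_Dg_eq g P' Q' (fun p hp => (hP' p hp).2) (fun p hp => (hQ' p hp).2)]
    calc -(ε * (m:ℝ)^3) = ∑ _v ∈ range m, -(ε * (m:ℝ)^2) := by
          rw [Finset.sum_const, nsmul_eq_mul, card_range]
          ring
      _ ≤ _ := by
          apply Finset.sum_le_sum
          intro v hv'
          exact hgood v hv' _ (mem_powerset.mpr (filter_subset _ _))
            _ (mem_powerset.mpr (filter_subset _ _))
  -- Step E: Kd is almost all of K
  have stepE : (K.card : ℝ) ≤ (Kd.card : ℝ) + (m:ℝ)^2 := by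
    have hsplit := Finset.card_filter_add_card_filter_not
      (s := K) (p := fun p => p.1 = p.2.2)
    have hdiag : (K.filter (fun p => p.1 = p.2.2)).card ≤ m^2 := by
      have hinj : Set.InjOn (fun p : ℕ × ℕ × ℕ => (p.1, p.2.1))
          ↑(K.filter (fun p => p.1 = p.2.2)) := by
        intro p hp q hq hpq
        simp only [Finset.coe_filter, Set.mem_setOf_eq] at hp hq
        have hp2 : p.1 = p.2.2 := hp.2
        have hq2 : q.1 = q.2.2 := hq.2
        have hpq' : (p.1, p.2.1) = (q.1, q.2.1) := hpq
        obtain ⟨e1, e2⟩ := Prod.mk.inj hpq' 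
        have e3 : p.2.2 = q.2.2 := by omega
        exact Prod.ext e1 (Prod.ext e2 e3)
      have hmapsto : ∀ p ∈ K.filter (fun p => p.1 = p.2.2),
          (fun p : ℕ × ℕ × ℕ => (p.1, p.2.1)) p ∈ (range m) ×ˢ (range m) := by
        intro p hp
        rw [mem_filter] at hp
        have := mem_KEE_iff.mp (hK ▸ hp.1)
        rw [mem_product]
        exact ⟨this.1, this.2.1⟩
      calc (K.filter (fun p => p.1 = p.2.2)).card ≤ ((range m) ×ˢ (range m)).card :=
            Finset.card_le_card_of_injOn _ hmapsto hinj
        _ = m^2 := by rw [Finset.card_product, card_range]; ring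
    have hcast : (K.card : ℝ) = ((K.filter (fun p => p.1 = p.2.2)).card : ℝ)
        + ((K.filter (fun p => ¬ p.1 = p.2.2)).card : ℝ) := by
      exact_mod_cast congrArg (fun n : ℕ => (n:ℝ)) hsplit.symm
    rw [hcast, hKd]
    have : ((K.filter (fun p => p.1 = p.2.2)).card : ℝ) ≤ (m:ℝ)^2 := by
      exact_mod_cast hdiag
    linarith
  -- Final assembly
  rw [ge_iff_le, hvc]
  have chain : lamEE P x * (K.card : ℝ) - η * (m:ℝ)^3
      ≤ ∑ p ∈ Kd, (if ({p.1, p.2.1, p.2.2} : Finset ℕ) ∈ (HH P g).edges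
          then (1:ℝ) else 0) := by
    rw [Finset.sum_congr rfl stepB]
    have b1 : lamEE P x * (K.card : ℝ) ≤ lamEE P x * ((Kd.card : ℝ) + (m:ℝ)^2) :=
      mul_le_mul_of_nonneg_left stepE hl0
    have b2 : lamEE P x * (m:ℝ)^2 ≤ (m:ℝ)^2 := by nlinarith [sq_nonneg (m:ℝ)]
    nlinarith [stepC, stepD]
  exact le_trans chain stepA

end
end PLB


namespace PLB
open Finset

noncomputable section

lemma piEE_nonneg (𝓕 : Set ThreeGraph) : 0 ≤ piEE 𝓕 := by
  rw [piEE]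
  rcases Set.eq_empty_or_nonempty {d : ℝ | 0 ≤ d ∧ d ≤ 1 ∧ ∀ η : ℝ, 0 < η → ∀ n : ℕ,
      ∃ H : ThreeGraph, n ≤ H.verts.card ∧ (∀ F ∈ 𝓕, ¬ IsSubhypergraph F H) ∧
        IsDenseEE H d η} with hS | hS
  · rw [hS, Real.sSup_empty]
  · obtain ⟨d, hd⟩ := hS
    have bdd : BddAbove {d : ℝ | 0 ≤ d ∧ d ≤ 1 ∧ ∀ η : ℝ, 0 < η → ∀ n : ℕ,
        ∃ H : ThreeGraph, n ≤ H.verts.card ∧ (∀ F ∈ 𝓕, ¬ IsSubhypergraph F H) ∧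
          IsDenseEE H d η} := ⟨1, fun d' hd' => hd'.2.1⟩
    exact le_trans hd.1 (le_csSup bdd hd)

lemma lamEE_mem {P : Palette} {x : ℕ → ℝ} {𝓕 : Set ThreeGraph} (hw : IsWeighting P x)
    (hpos : 0 < lamEE P x) (hfree : ∀ F ∈ 𝓕, ¬ Satisfies F P) :
    lamEE P x ∈ {d : ℝ | 0 ≤ d ∧ d ≤ 1 ∧ ∀ η : ℝ, 0 < η → ∀ n : ℕ,
      ∃ H : ThreeGraph, n ≤ H.verts.card ∧ (∀ F ∈ 𝓕, ¬ IsSubhypergraph F H) ∧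
        IsDenseEE H d η} := by
  refine ⟨hpos.le, lamEE_le_one hw, ?_⟩
  intro η hη n
  set ε : ℝ := min (η/2) 1 with hεdef
  have hε0 : 0 < ε := lt_min (by linarith) one_pos
  have hε1 : ε ≤ 1 := min_le_right _ _
  have hεη : ε ≤ η/2 := min_le_left _ _
  obtain ⟨M, hM⟩ := nat_four_pow_lt ε hε0
  set m : ℕ := max (max n M) (max 2 (⌈2/η⌉₊ + 1)) with hmdef
  have hmn : n ≤ m := le_trans (le_max_left n M) (le_max_left _ _)
  have hmM : M ≤ m := le_trans (le_max_right n M) (le_max_left _ _)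
  have hm2 : 2 ≤ m := le_trans (le_max_left 2 _) (le_max_right _ _)
  have hmceil : (⌈2/η⌉₊ + 1 : ℕ) ≤ m := le_trans (le_max_right 2 _) (le_max_right _ _)
  have hm2η : 2/η ≤ (m:ℝ) := by
    calc 2/η ≤ (⌈2/η⌉₊ : ℝ) := Nat.le_ceil _
      _ ≤ (m:ℝ) := by exact_mod_cast le_trans (Nat.le_succ _) hmceil
  have hm1 : (1:ℝ) ≤ (m:ℝ) := by exact_mod_cast le_trans (by norm_num) hm2
  have harith : (m:ℝ)^2 + ε * (m:ℝ)^3 ≤ η * (m:ℝ)^3 := by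
    have h1 : (1:ℝ) ≤ (η/2) * (m:ℝ) := by
      have hh := mul_le_mul_of_nonneg_left hm2η (by linarith : (0:ℝ) ≤ η/2)
      have he : (η/2) * (2/η) = 1 := by field_simp
      linarith
    have h2 : (m:ℝ)^2 ≤ (η/2) * (m:ℝ)^3 := by nlinarith
    have h3 : ε * (m:ℝ)^3 ≤ (η/2) * (m:ℝ)^3 := by nlinarith
    linarith
  have hsmall : (m:ℝ) * (2^m * 2^m) * Real.exp (-(ε^2 * m^2)/32) < 1 := by
    have h := hM m hmM
    calc (m:ℝ) * (2^m * 2^m) * Real.exp (-(ε^2 * m^2)/32)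
        = (m:ℝ) * 2^m * 2^m * Real.exp (-(ε^2 * m^2)/32) := by ring
      _ < 1 := h
  obtain ⟨g, hg, hgood⟩ := exists_good hw hm2 hε0 hε1 hsmall
  refine ⟨HH P g, ?_, HH_free hg hfree, ?_⟩
  · show n ≤ (range m).card
    rw [card_range]
    exact hmn
  · exact HH_dense hw hg hε0.le hgood harith

end
end PLB


/-- If no member of a family 𝓕 satisfies the palette 𝒫, then
π_{ee}(𝓕) ≥ Λ^{ee}_𝒫. -/
theorem palette_lower_bound_EE (P : Palette) (𝓕 : Set ThreeGraph)
    (h : ∀ F ∈ 𝓕, ¬ Satisfies F P) :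
    LambdaEE P ≤ piEE 𝓕 := by
  have hpi0 : 0 ≤ piEE 𝓕 := PLB.piEE_nonneg 𝓕
  rw [LambdaEE]
  apply Real.sSup_le _ hpi0
  rintro l ⟨x, hw, rfl⟩
  rcases le_or_gt (lamEE P x) 0 with hle | hpos
  · exact le_trans hle hpi0
  · rw [piEE]
    have bdd : BddAbove {d : ℝ | 0 ≤ d ∧ d ≤ 1 ∧ ∀ η : ℝ, 0 < η → ∀ n : ℕ,
        ∃ H : ThreeGraph, n ≤ H.verts.card ∧ (∀ F ∈ 𝓕, ¬ IsSubhypergraph F H) ∧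
          IsDenseEE H d η} := ⟨1, fun d' hd' => hd'.2.1⟩
    exact le_csSup bdd (PLB.lamEE_mem hw hpos h)
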